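/- arXiv:2512.23204 — 5 statements merged into one kernel-verified Lean document; each statement's English description precedes it below -/
import Mathlib

section
/- Let U ⊆ ℂ^m be open and f : U → ℂ holomorphic. Write f(x+iy) = u(x,y) + i v(x,y) for (x,y) ∈ U_ℝ := {(x,y) ∈ ℝ^m × ℝ^m : x+iy ∈ U}, where u, v : U_ℝ → ℝ are real-valued. Let u''(x,y) and v''(x,y) denote the 2m×2m real Hessian matrices of u and v in the variables (x₁,…,x_m,y₁,…,y_m), and let f''(z) := (∂²f/∂z_j∂z_k)_{j,k=1}^m denote the m×m complex Hessian. Then for all θ₁, θ₂ ∈ ℝ and all (x,y) ∈ U_ℝ: det(θ₁ u''(x,y) + θ₂ v''(x,y)) = (−1)^m (θ₁² + θ₂²)^m |det f''(x+iy)|². -/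
open scoped BigOperators

noncomputable section

/-- Identify a pair `(x, y) ∈ ℝ^m × ℝ^m` with the point `x + iy ∈ ℂ^m`. -/
def toC {m : ℕ} (p : (Fin m → ℝ) × (Fin m → ℝ)) : Fin m → ℂ :=
  fun j => (p.1 j : ℂ) + (p.2 j : ℂ) * Complex.I

/-- Standard basis vectors of `ℝ^m × ℝ^m`, indexed by `Fin m ⊕ Fin m`. -/
def eb {m : ℕ} : Fin m ⊕ Fin m → (Fin m → ℝ) × (Fin m → ℝ) :=
  Sum.elim (fun i => (Pi.single i 1, 0)) (fun i => (0, Pi.single i 1))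

/-- The `2m × 2m` real Hessian of `g : ℝ^m × ℝ^m → ℝ` in the variables `(x₁,…,x_m,y₁,…,y_m)`. -/
def hess2 {m : ℕ} (g : (Fin m → ℝ) × (Fin m → ℝ) → ℝ) (p : (Fin m → ℝ) × (Fin m → ℝ)) :
    Matrix (Fin m ⊕ Fin m) (Fin m ⊕ Fin m) ℝ :=
  Matrix.of fun i j => fderiv ℝ (fun q => fderiv ℝ g q (eb j)) p (eb i)

/-- The `m × m` complex Hessian of `f : ℂ^m → ℂ`. -/
def chess {m : ℕ} (f : (Fin m → ℂ) → ℂ) (z : Fin m → ℂ) : Matrix (Fin m) (Fin m) ℂ :=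
  Matrix.of fun j k => fderiv ℂ (fun w => fderiv ℂ f w (Pi.single k 1)) z (Pi.single j 1)

section Auxiliary
open Metric Set Complex MeasureTheory

lemma cauchy_fderiv_bound {E : Type*} [NormedAddCommGroup E] [NormedSpace ℂ E]
    {f : E → ℂ} {z₀ : E} {R M : ℝ} (hR : 0 < R)
    (hf : DifferentiableOn ℂ f (ball z₀ R))
    (hM : ∀ w ∈ ball z₀ R, ‖f w‖ ≤ M) {z : E} (hz : z ∈ ball z₀ (R/2)) (a : E) :
    ‖fderiv ℂ f z a‖ ≤ M / (R/4) * ‖a‖ := by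
  rcases eq_or_ne a 0 with rfl | ha
  · simp
  have hna : 0 < ‖a‖ := norm_pos_iff.mpr ha
  set ρ : ℝ := (R/4) / ‖a‖ with hρdef
  have hρ : 0 < ρ := by positivity
  set φ : ℂ → ℂ := fun t => f (z + t • a) with hφ
  -- the line map sends ball 0 (2ρ) into ball z₀ R
  have hmaps : ∀ t : ℂ, t ∈ ball (0:ℂ) (2*ρ) → z + t • a ∈ ball z₀ R := by
    intro t ht
    simp only [mem_ball, dist_zero_right] at ht
    have h1 : dist z z₀ < R/2 := mem_ball.mp hz
    have : dist (z + t • a) z₀ ≤ ‖t • a‖ + dist z z₀ := by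
      rw [dist_eq_norm, dist_eq_norm]
      calc ‖z + t • a - z₀‖ = ‖t • a + (z - z₀)‖ := by rw [show z + t • a - z₀ = t • a + (z - z₀) by abel]
        _ ≤ ‖t • a‖ + ‖z - z₀‖ := norm_add_le _ _
    have h2 : ‖t • a‖ < R/2 := by
      rw [norm_smul]
      calc ‖t‖ * ‖a‖ < 2*ρ * ‖a‖ := by gcongr
        _ = R/2 := by rw [hρdef]; field_simp; ring
    simp only [mem_ball]
    linarith
  have hφdiff : DifferentiableOn ℂ φ (ball (0:ℂ) (2*ρ)) := by
    intro t ht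
    have h1 : DifferentiableAt ℂ f (z + t • a) :=
      hf.differentiableAt (isOpen_ball.mem_nhds (hmaps t ht))
    have h2 : DifferentiableAt ℂ (fun t : ℂ => z + t • a) t := by
      apply DifferentiableAt.const_add
      exact (differentiableAt_id.smul_const a)
    exact (h1.comp t h2).differentiableWithinAt
  have hline : HasDerivAt (fun t : ℂ => z + t • a) a 0 := by
    simpa using ((hasDerivAt_id (0:ℂ)).smul_const a).const_add z
  have hfz : DifferentiableAt ℂ f (z + (0:ℂ) • a) := by
    apply hf.differentiableAt (isOpen_ball.mem_nhds (hmaps 0 (by simp [hρ])))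
  have hd : HasDerivAt φ (fderiv ℂ f z a) 0 := by
    have := (hfz.hasFDerivAt.comp_hasDerivAt 0 hline)
    simp only [zero_smul, add_zero] at this
    exact this
  have hderiv : deriv φ 0 = fderiv ℂ f z a := hd.deriv
  have hcd : Complex.cderiv ρ φ 0 = deriv φ 0 := by
    apply Complex.cderiv_eq_deriv isOpen_ball hφdiff hρ
    intro t ht
    simp only [mem_closedBall, dist_zero_right] at ht
    simp only [mem_ball, dist_zero_right]
    · exact lt_of_le_of_lt ht (by linarith)
  have hbd : ‖Complex.cderiv ρ φ 0‖ ≤ M / ρ := by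
    apply Complex.norm_cderiv_le hρ
    intro w hw
    apply hM
    apply hmaps
    simp only [mem_sphere_iff_norm, sub_zero] at hw
    simp [mem_ball, dist_zero_right, hw]
    linarith
  rw [← hderiv, ← hcd]
  calc ‖Complex.cderiv ρ φ 0‖ ≤ M / ρ := hbd
    _ = M / (R/4) * ‖a‖ := by rw [hρdef]; field_simp

/-- Key regularity lemma: the directional derivative of a holomorphic function on an open
set in `ℂ^m` is holomorphic. -/
lemma diffAt_fderiv_apply {m : ℕ} {f : (Fin m → ℂ) → ℂ} {U : Set (Fin m → ℂ)}
    (hU : IsOpen U) (hf : DifferentiableOn ℂ f U) (c : Fin m → ℂ) {z₀ : Fin m → ℂ}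
    (hz₀ : z₀ ∈ U) : DifferentiableAt ℂ (fun z => fderiv ℂ f z c) z₀ := by
  rcases eq_or_ne c 0 with rfl | hc
  · simp only [map_zero]
    exact differentiableAt_const 0
  have hnc : 0 < ‖c‖ := norm_pos_iff.mpr hc
  -- choose a ball around z₀ inside U on which f is bounded
  obtain ⟨R₁, hR₁, hball₁⟩ := Metric.isOpen_iff.mp hU z₀ hz₀
  have hcont : ContinuousAt f z₀ :=
    (hf.differentiableAt (hU.mem_nhds hz₀)).continuousAt
  obtain ⟨R₂, hR₂, hball₂⟩ := Metric.continuousAt_iff.mp hcont 1 one_pos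
  set R : ℝ := min R₁ R₂ with hRdef
  have hR : 0 < R := lt_min hR₁ hR₂
  set M : ℝ := ‖f z₀‖ + 1 with hMdef
  have hballU : ball z₀ R ⊆ U := fun w hw => hball₁ (mem_ball.mpr (lt_of_lt_of_le (mem_ball.mp hw) (min_le_left _ _)))
  have hMb : ∀ w ∈ ball z₀ R, ‖f w‖ ≤ M := by
    intro w hw
    have : dist (f w) (f z₀) < 1 := hball₂ (lt_of_lt_of_le (mem_ball.mp hw) (min_le_right _ _))
    calc ‖f w‖ ≤ ‖f z₀‖ + ‖f w - f z₀‖ := by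
          simpa using norm_add_le (f z₀) (f w - f z₀)
      _ ≤ ‖f z₀‖ + 1 := by rw [dist_eq_norm] at this; linarith
  have hfb : DifferentiableOn ℂ f (ball z₀ R) := hf.mono hballU
  -- set up radii
  set ρ : ℝ := (R/8) / ‖c‖ with hρdef
  have hρ : 0 < ρ := by positivity
  set r : ℝ := 2 * ρ with hrdef
  have hr : 0 < r := by positivity
  have hrc : r * ‖c‖ = R/4 := by rw [hrdef, hρdef]; field_simp; ring
  set ε : ℝ := R/8 with hεdef
  have hε : 0 < ε := by positivity
  -- the integrand
  set F : (Fin m → ℂ) → ℝ → ℂ := fun z θ =>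
    deriv (circleMap 0 r) θ • (((circleMap 0 r θ) ^ 2)⁻¹ • f (z + circleMap 0 r θ • c)) with hF
  set F' : (Fin m → ℂ) → ℝ → (Fin m → ℂ) →L[ℂ] ℂ := fun z θ =>
    (deriv (circleMap 0 r) θ * ((circleMap 0 r θ) ^ 2)⁻¹) •
      fderiv ℂ f (z + circleMap 0 r θ • c) with hF'
  -- points hit by the integrand stay well inside the ball
  have hρc : ρ * ‖c‖ = R/8 := by rw [hρdef, hεdef]; field_simp
  have hpt0 : ∀ z ∈ ball z₀ ε, ∀ w : ℂ, ‖w‖ < 3*ρ → z + w • c ∈ ball z₀ (R/2) := by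
    intro z hz w hw
    have h1 : ‖z - z₀‖ < ε := by rw [← dist_eq_norm]; exact hz
    have h2 : ‖w • c‖ < 3 * (R/8) := by
      rw [norm_smul]
      calc ‖w‖ * ‖c‖ < 3*ρ * ‖c‖ := by gcongr
        _ = 3 * (R/8) := by rw [mul_assoc, hρc]
    have h3 : ‖z + w • c - z₀‖ ≤ ‖z - z₀‖ + ‖w • c‖ := by
      calc ‖z + w • c - z₀‖ = ‖(z - z₀) + w • c‖ := by
            rw [show z + w • c - z₀ = (z - z₀) + w • c by abel]
        _ ≤ ‖z - z₀‖ + ‖w • c‖ := norm_add_le _ _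
    rw [mem_ball, dist_eq_norm]
    have hε8 : ε = R/8 := hεdef
    calc ‖z + w • c - z₀‖ ≤ ‖z - z₀‖ + ‖w • c‖ := h3
      _ < R/8 + 3*(R/8) := by rw [← hε8]; exact add_lt_add h1 h2
      _ = R/2 := by ring
  have hrρ : r < 3 * ρ := by rw [hrdef]; linarith
  have hpt : ∀ z ∈ ball z₀ ε, ∀ w : ℂ, ‖w‖ ≤ r → z + w • c ∈ ball z₀ (R/2) := by
    intro z hz w hw
    exact hpt0 z hz w (lt_of_le_of_lt hw hrρ)
  have hhalf : ball z₀ (R/2) ⊆ ball z₀ R := ball_subset_ball (by linarith)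
  -- continuity of the circle map composition
  have hcm : Continuous fun θ => circleMap 0 r θ • c := by
    exact (continuous_circleMap 0 r).smul continuous_const
  have hcderiv : Continuous fun θ => deriv (circleMap 0 r) θ := by
    simp only [deriv_circleMap]
    exact ((continuous_circleMap 0 r).mul continuous_const)
  have hcontθ : ∀ z ∈ ball z₀ ε, Continuous (F z) := by
    intro z hz
    apply Continuous.smul hcderiv
    apply Continuous.smul (f := fun θ => ((circleMap 0 r θ) ^ 2)⁻¹)
      (g := fun θ => f (z + circleMap 0 r θ • c))
    · exact (((continuous_circleMap 0 r).pow 2).inv₀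
        (fun θ => pow_ne_zero 2 (circleMap_ne_center hr.ne')))
    · apply (hf.continuousOn.mono hballU |>.mono hhalf).comp_continuous
        (continuous_const.add hcm)
      intro θ
      exact hpt z hz _ (by simp [circleMap, abs_of_pos hr])
  -- measurability of F' z₀
  have hmeasF' : AEStronglyMeasurable (F' z₀) (volume.restrict (Set.uIoc (0:ℝ) (2*Real.pi))) := by
    apply AEStronglyMeasurable.smul (f := fun θ => deriv (circleMap 0 r) θ * ((circleMap 0 r θ) ^ 2)⁻¹)
      (g := fun θ => fderiv ℂ f (z₀ + circleMap 0 r θ • c))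
    · exact (hcderiv.mul (((continuous_circleMap 0 r).pow 2).inv₀
        (fun θ => pow_ne_zero 2 (circleMap_ne_center hr.ne')))).aestronglyMeasurable
    · have h1 : Measurable fun θ => z₀ + circleMap 0 r θ • c :=
        (continuous_const.add hcm).measurable
      exact ((measurable_fderiv ℂ f).comp h1).stronglyMeasurable.aestronglyMeasurable
  -- the derivative bound
  have hbound : ∀ᵐ θ ∂(volume : Measure ℝ), θ ∈ Set.uIoc (0:ℝ) (2*Real.pi) →
      ∀ z ∈ ball z₀ ε, ‖F' z θ‖ ≤ r⁻¹ * (M / (R/4)) := by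
    filter_upwards with θ _ z hz
    simp only [hF']
    have h1 : ‖(deriv (circleMap 0 r) θ * ((circleMap 0 r θ) ^ 2)⁻¹)‖ = r⁻¹ := by
      simp only [deriv_circleMap, norm_mul, norm_inv, norm_pow]
      simp only [norm_circleMap_zero, Complex.norm_I, mul_one]
      rw [abs_of_pos hr, sq]
      field_simp
    have hns := norm_smul (deriv (circleMap 0 r) θ * ((circleMap 0 r θ) ^ 2)⁻¹)
      (fderiv ℂ f (z + circleMap 0 r θ • c))
    rw [h1] at hns
    rw [hns]
    have h2 : z + circleMap 0 r θ • c ∈ ball z₀ (R/2) :=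
      hpt z hz _ (by simp [circleMap, abs_of_pos hr])
    gcongr
    apply ContinuousLinearMap.opNorm_le_bound _ (by positivity)
    intro a
    exact cauchy_fderiv_bound hR hfb hMb h2 a
  -- differentiability of the integrand in z
  have hdiffz : ∀ᵐ θ ∂(volume : Measure ℝ), θ ∈ Set.uIoc (0:ℝ) (2*Real.pi) →
      ∀ z ∈ ball z₀ ε, HasFDerivAt (fun z => F z θ) (F' z θ) z := by
    filter_upwards with θ _ z hz
    have hw : ‖circleMap 0 r θ‖ ≤ r := by simp [circleMap, abs_of_pos hr]
    have hmem : z + circleMap 0 r θ • c ∈ U := hballU (hhalf (hpt z hz _ hw))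
    have hdf : HasFDerivAt f (fderiv ℂ f (z + circleMap 0 r θ • c))
        (z + circleMap 0 r θ • c) := (hf.differentiableAt (hU.mem_nhds hmem)).hasFDerivAt
    have ht : HasFDerivAt (fun z : Fin m → ℂ => z + circleMap 0 r θ • c)
        (ContinuousLinearMap.id ℂ (Fin m → ℂ)) z := (hasFDerivAt_id z).add_const _
    have hcomp := hdf.comp z ht
    rw [ContinuousLinearMap.comp_id] at hcomp
    have h3 := (hcomp.const_smul ((circleMap 0 r θ) ^ 2)⁻¹).const_smul
      (deriv (circleMap 0 r) θ)
    have : F' z θ = deriv (circleMap 0 r) θ •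
        (((circleMap 0 r θ) ^ 2)⁻¹ • fderiv ℂ f (z + circleMap 0 r θ • c)) := by
      simp only [hF', smul_smul]
    rw [this]
    exact h3
  -- measurability / integrability of the integrand
  have hFmeas : ∀ᶠ x in nhds z₀, AEStronglyMeasurable (F x)
      (volume.restrict (Set.uIoc (0:ℝ) (2*Real.pi))) := by
    filter_upwards [ball_mem_nhds z₀ hε] with x hx
    exact (hcontθ x hx).aestronglyMeasurable
  have hFint : IntervalIntegrable (F z₀) volume 0 (2*Real.pi) :=
    (hcontθ z₀ (mem_ball_self hε)).intervalIntegrable 0 (2*Real.pi)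
  -- differentiation under the integral sign
  have hmain := intervalIntegral.hasFDerivAt_integral_of_dominated_of_fderiv_le
    (𝕜 := ℂ) (μ := volume) (bound := fun _ => r⁻¹ * (M / (R/4)))
    (ball_mem_nhds z₀ hε) hFmeas hFint hmeasF' hbound
    (intervalIntegrable_const) hdiffz
  -- identification with the Cauchy integral representation of the derivative
  have hrep : ∀ z ∈ ball z₀ ε,
      fderiv ℂ f z c = (2 * Real.pi * Complex.I : ℂ)⁻¹ • ∫ θ in (0:ℝ)..2*Real.pi, F z θ := by
    intro z hz
    set φ : ℂ → ℂ := fun t => f (z + t • c) with hφ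
    have hφdiff : DifferentiableOn ℂ φ (ball (0:ℂ) (3*ρ)) := by
      intro t ht
      simp only [mem_ball, dist_zero_right] at ht
      have h1 : DifferentiableAt ℂ f (z + t • c) :=
        hf.differentiableAt (hU.mem_nhds (hballU (hhalf (hpt0 z hz t ht))))
      have h2 : DifferentiableAt ℂ (fun t : ℂ => z + t • c) t :=
        (differentiableAt_id.smul_const c).const_add z
      exact (h1.comp t h2).differentiableWithinAt
    have hline : HasDerivAt (fun t : ℂ => z + t • c) c 0 := by
      simpa using ((hasDerivAt_id (0:ℂ)).smul_const c).const_add z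
    have hfz : DifferentiableAt ℂ f (z + (0:ℂ) • c) := by
      apply hf.differentiableAt
      apply hU.mem_nhds
      apply hballU (hhalf (hpt0 z hz 0 (by simpa using by positivity)))
    have hd : HasDerivAt φ (fderiv ℂ f z c) 0 := by
      have := (hfz.hasFDerivAt.comp_hasDerivAt 0 hline)
      simp only [zero_smul, add_zero] at this
      exact this
    have hcd : Complex.cderiv r φ 0 = deriv φ 0 := by
      apply Complex.cderiv_eq_deriv isOpen_ball hφdiff hr
      intro t ht
      simp only [mem_closedBall, dist_zero_right] at ht
      simp only [mem_ball, dist_zero_right]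
      exact lt_of_le_of_lt ht hrρ
    rw [← hd.deriv, ← hcd]
    simp only [Complex.cderiv, circleIntegral, sub_zero, hφ, hF]
  -- conclusion
  have hdiff2 : DifferentiableAt ℂ
      (fun z => (2 * Real.pi * Complex.I : ℂ)⁻¹ • ∫ θ in (0:ℝ)..2*Real.pi, F z θ) z₀ :=
    (hmain.differentiableAt).const_smul ((2 * Real.pi * Complex.I : ℂ)⁻¹)
  apply hdiff2.congr_of_eventuallyEq
  filter_upwards [ball_mem_nhds z₀ hε] with z hz
  exact hrep z hz

end Auxiliary

section Aux2
open Metric Set Complex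
/-- `toC` as a continuous `ℝ`-linear map. -/
noncomputable def toCL (m : ℕ) : ((Fin m → ℝ) × (Fin m → ℝ)) →L[ℝ] (Fin m → ℂ) :=
  LinearMap.toContinuousLinearMap
    { toFun := toC
      map_add' := by
        intro p q; funext k; simp [toC]; push_cast; ring
      map_smul' := by
        intro r p; funext k; simp [toC, Complex.real_smul]; push_cast; ring }

lemma toCL_apply {m : ℕ} (p : (Fin m → ℝ) × (Fin m → ℝ)) : toCL m p = toC p := rfl

def mu {m : ℕ} : Fin m ⊕ Fin m → ℂ := Sum.elim (fun _ => 1) (fun _ => Complex.I)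
def idx {m : ℕ} : Fin m ⊕ Fin m → Fin m := Sum.elim id id

lemma toC_eb {m : ℕ} (j : Fin m ⊕ Fin m) :
    toC (eb j) = mu j • (Pi.single (idx j) 1 : Fin m → ℂ) := by
  rcases j with i | i <;> funext l <;> by_cases h : l = i <;>
    simp [toC, eb, mu, idx, Pi.single_apply, h]

/-- The entries of the real Hessian of `e ∘ f ∘ toC` in terms of the complex Hessian of `f`. -/
lemma hess2_entry {m : ℕ} {f : (Fin m → ℂ) → ℂ} {U : Set (Fin m → ℂ)}
    (hU : IsOpen U) (hf : DifferentiableOn ℂ f U)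
    (e : ℂ →L[ℝ] ℝ) {u : (Fin m → ℝ) × (Fin m → ℝ) → ℝ}
    (hu : ∀ p, u p = e (f (toC p))) {p : (Fin m → ℝ) × (Fin m → ℝ)} (hp : toC p ∈ U)
    (i j : Fin m ⊕ Fin m) :
    hess2 u p i j = e (mu i * mu j * chess f (toC p) (idx i) (idx j)) := by
  have heq : u = fun p => e (f (toC p)) := funext hu
  set V : Set ((Fin m → ℝ) × (Fin m → ℝ)) := toC ⁻¹' U with hV
  have hVopen : IsOpen V := by
    apply IsOpen.preimage _ hU
    exact (toCL m).continuous
  have hpV : p ∈ V := hp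
  set G : (Fin m → ℂ) → ℂ := fun z => fderiv ℂ f z (Pi.single (idx j) 1) with hG
  -- first derivative identity on V
  have hfd : ∀ q ∈ V, fderiv ℝ u q (eb j) = e (mu j • G (toC q)) := by
    intro q hq
    have hd : DifferentiableAt ℂ f (toC q) := hf.differentiableAt (hU.mem_nhds hq)
    have hA : HasFDerivAt (fun p => f (toC p))
        (((fderiv ℂ f (toC q)).restrictScalars ℝ).comp (toCL m)) q :=
      (hd.hasFDerivAt.restrictScalars ℝ).comp q (toCL m).hasFDerivAt
    have h2 : HasFDerivAt u
        (e.comp (((fderiv ℂ f (toC q)).restrictScalars ℝ).comp (toCL m))) q := by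
      rw [heq]; exact e.hasFDerivAt.comp q hA
    rw [h2.fderiv]
    simp only [ContinuousLinearMap.comp_apply, ContinuousLinearMap.coe_restrictScalars',
      toCL_apply, toC_eb j]
    congr 1
    exact (fderiv ℂ f (toC q)).map_smul _ _
  -- outer derivative
  have hGd : DifferentiableAt ℂ G (toC p) := diffAt_fderiv_apply hU hf _ hp
  have hB : HasFDerivAt (fun q => G (toC q))
      (((fderiv ℂ G (toC p)).restrictScalars ℝ).comp (toCL m)) p :=
    (hGd.hasFDerivAt.restrictScalars ℝ).comp p (toCL m).hasFDerivAt
  have hC : HasFDerivAt (fun q => mu j • G (toC q))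
      (mu j • (((fderiv ℂ G (toC p)).restrictScalars ℝ).comp (toCL m))) p :=
    hB.const_smul (mu j)
  have hD : HasFDerivAt (fun q => e (mu j • G (toC q)))
      (e.comp (mu j • (((fderiv ℂ G (toC p)).restrictScalars ℝ).comp (toCL m)))) p :=
    e.hasFDerivAt.comp p hC
  have hee : (fun q => fderiv ℝ u q (eb j)) =ᶠ[nhds p] (fun q => e (mu j • G (toC q))) := by
    filter_upwards [hVopen.mem_nhds hpV] with q hq
    exact hfd q hq
  have : hess2 u p i j = fderiv ℝ (fun q => e (mu j • G (toC q))) p (eb i) := by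
    show fderiv ℝ (fun q => fderiv ℝ u q (eb j)) p (eb i) = _
    rw [hee.fderiv_eq]
  rw [this, hD.fderiv]
  simp only [ContinuousLinearMap.comp_apply, ContinuousLinearMap.smul_apply,
    ContinuousLinearMap.coe_restrictScalars', toCL_apply, toC_eb i]
  congr 1
  rw [(fderiv ℂ G (toC p)).map_smul]
  have hc : fderiv ℂ G (toC p) (Pi.single (idx i) 1) = chess f (toC p) (idx i) (idx j) := rfl
  rw [hc, smul_smul, smul_eq_mul]
  ring

end Aux2

section Aux3
open Matrix Complex
/-- Determinant of the real `2m × 2m` matrix `[[A, -B], [-B, -A]]` where `A`, `B` are the real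
and imaginary parts of a complex matrix `K`. -/
lemma det_fromBlocks_re_im (m : ℕ) (K : Matrix (Fin m) (Fin m) ℂ) :
    (Matrix.fromBlocks (K.map Complex.re) (-(K.map Complex.im))
      (-(K.map Complex.im)) (-(K.map Complex.re))).det
    = (-1) ^ m * Complex.normSq K.det := by
  set A : Matrix (Fin m) (Fin m) ℂ := K.map (fun z => (z.re : ℂ)) with hA
  set B : Matrix (Fin m) (Fin m) ℂ := K.map (fun z => (z.im : ℂ)) with hB
  set N : Matrix (Fin m ⊕ Fin m) (Fin m ⊕ Fin m) ℂ := fromBlocks A (-B) (-B) (-A) with hN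
  -- the coerced matrix
  have hmap : (Matrix.fromBlocks (K.map Complex.re) (-(K.map Complex.im))
      (-(K.map Complex.im)) (-(K.map Complex.re))).map (algebraMap ℝ ℂ) = N := by
    ext i j
    rcases i with i | i <;> rcases j with j | j <;>
      simp [hN, hA, hB, Matrix.fromBlocks, Matrix.map_apply]
  set P : Matrix (Fin m ⊕ Fin m) (Fin m ⊕ Fin m) ℂ :=
    fromBlocks 1 0 (Complex.I • 1) 1 with hP
  have hPdet : P.det = 1 := by
    rw [hP, Matrix.det_fromBlocks_zero₁₂]
    simp
  have hkey : P * N * P = fromBlocks (A - Complex.I • B) (-B) 0 (-(A + Complex.I • B)) := by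
    rw [hP, hN, Matrix.fromBlocks_multiply, Matrix.fromBlocks_multiply,
      Matrix.fromBlocks_inj]
    refine ⟨?_, ?_, ?_, ?_⟩ <;>
      simp only [Matrix.one_mul, Matrix.mul_one, Matrix.zero_mul, Matrix.mul_zero,
        Matrix.smul_mul, Matrix.mul_smul, add_zero, zero_add,
        Matrix.neg_mul, Matrix.mul_neg, smul_neg, neg_neg,
        smul_smul, Complex.I_mul_I, neg_one_smul] <;>
      (match_scalars <;> simp [Complex.I_sq] <;> ring)
  have hAB1 : A + Complex.I • B = K := by
    ext i j
    simp only [hA, hB, Matrix.add_apply, Matrix.smul_apply, Matrix.map_apply, smul_eq_mul]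
    rw [mul_comm]
    exact Complex.re_add_im _
  have hAB2 : A - Complex.I • B = K.map (starRingEnd ℂ) := by
    ext i j
    simp only [hA, hB, Matrix.sub_apply, Matrix.smul_apply, Matrix.map_apply, smul_eq_mul]
    apply Complex.ext <;> simp
  have hdetN : N.det = (-1 : ℂ) ^ m * (Complex.normSq K.det : ℂ) := by
    have h1 : N.det = (P * N * P).det := by
      rw [Matrix.det_mul, Matrix.det_mul, hPdet, one_mul, mul_one]
    have hconj : (K.map ⇑(starRingEnd ℂ)).det = (starRingEnd ℂ) K.det := by
      rw [← RingHom.mapMatrix_apply, ← RingHom.map_det]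
    rw [h1, hkey, Matrix.det_fromBlocks_zero₂₁, hAB1, hAB2, Matrix.det_neg, hconj]
    rw [Fintype.card_fin]
    rw [show (starRingEnd ℂ) K.det * ((-1) ^ m * K.det)
        = (-1) ^ m * ((starRingEnd ℂ) K.det * K.det) by ring]
    congr 1
    rw [mul_comm, Complex.mul_conj]
  have hcast := RingHom.map_det (algebraMap ℝ ℂ)
    (Matrix.fromBlocks (K.map Complex.re) (-(K.map Complex.im))
      (-(K.map Complex.im)) (-(K.map Complex.re)))
  rw [RingHom.mapMatrix_apply] at hcast
  rw [hmap, hdetN] at hcast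
  have : ((Matrix.fromBlocks (K.map Complex.re) (-(K.map Complex.im))
      (-(K.map Complex.im)) (-(K.map Complex.re))).det : ℂ)
      = (((-1) ^ m * Complex.normSq K.det : ℝ) : ℂ) := by
    rw [show ((((Matrix.fromBlocks (K.map Complex.re) (-(K.map Complex.im))
      (-(K.map Complex.im)) (-(K.map Complex.re))).det : ℝ)) : ℂ)
      = (algebraMap ℝ ℂ) (Matrix.fromBlocks (K.map Complex.re) (-(K.map Complex.im))
      (-(K.map Complex.im)) (-(K.map Complex.re))).det from rfl, hcast]
    push_cast; ring
  exact_mod_cast this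

end Aux3

open Metric Set Complex

/-- the determinant identity relating the real Hessians of the real and imaginary
parts of a holomorphic function to its complex Hessian. -/
theorem statement2
    (m : ℕ) (U : Set (Fin m → ℂ)) (hUopen : IsOpen U)
    (f : (Fin m → ℂ) → ℂ) (hf : DifferentiableOn ℂ f U)
    (u v : (Fin m → ℝ) × (Fin m → ℝ) → ℝ)
    (hu : ∀ p, u p = (f (toC p)).re) (hv : ∀ p, v p = (f (toC p)).im) :
    ∀ (θ₁ θ₂ : ℝ) (p : (Fin m → ℝ) × (Fin m → ℝ)), toC p ∈ U →
      Matrix.det (θ₁ • hess2 u p + θ₂ • hess2 v p)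
        = (-1) ^ m * (θ₁ ^ 2 + θ₂ ^ 2) ^ m *
            ‖Matrix.det (chess f (toC p))‖ ^ 2 := by
  intro θ₁ θ₂ p hp
  set z : Fin m → ℂ := toC p with hz
  set H : Matrix (Fin m) (Fin m) ℂ := chess f z with hH
  set c : ℂ := (θ₁ : ℂ) - (θ₂ : ℂ) * Complex.I with hc
  set K : Matrix (Fin m) (Fin m) ℂ := c • H with hK
  have hu' : ∀ q, u q = Complex.reCLM (f (toC q)) := fun q => by rw [hu q]; rfl
  have hv' : ∀ q, v q = Complex.imCLM (f (toC q)) := fun q => by rw [hv q]; rfl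
  have hcre : c.re = θ₁ := by simp [hc]
  have hcim : c.im = -θ₂ := by simp [hc]
  -- identify the combined Hessian with the block matrix
  have hM : θ₁ • hess2 u p + θ₂ • hess2 v p
      = Matrix.fromBlocks (K.map Complex.re) (-(K.map Complex.im))
        (-(K.map Complex.im)) (-(K.map Complex.re)) := by
    ext i j
    have h1 := hess2_entry hUopen hf Complex.reCLM hu' hp i j
    have h2 := hess2_entry hUopen hf Complex.imCLM hv' hp i j
    have hentry : (θ₁ • hess2 u p + θ₂ • hess2 v p) i j
        = θ₁ * (mu i * mu j * H (idx i) (idx j)).re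
          + θ₂ * (mu i * mu j * H (idx i) (idx j)).im := by
      simp only [Matrix.add_apply, Matrix.smul_apply, smul_eq_mul, h1, h2]
      rfl
    rw [hentry]
    rcases i with a | a <;> rcases j with b | b <;>
      simp only [mu, idx, Sum.elim_inl, Sum.elim_inr, id_eq, one_mul, mul_one,
        Matrix.fromBlocks_apply₁₁, Matrix.fromBlocks_apply₁₂, Matrix.fromBlocks_apply₂₁,
        Matrix.fromBlocks_apply₂₂, Matrix.map_apply, Matrix.neg_apply, hK,
        Matrix.smul_apply, smul_eq_mul] <;>
      simp only [Complex.mul_re, Complex.mul_im, Complex.I_re, Complex.I_im, hcre, hcim] <;>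
      ring
  rw [hM, det_fromBlocks_re_im]
  have hdetK : Complex.normSq K.det = (θ₁ ^ 2 + θ₂ ^ 2) ^ m * Complex.normSq H.det := by
    rw [hK, Matrix.det_smul, Fintype.card_fin, map_mul, map_pow]
    congr 2
    simp [Complex.normSq_apply, hcre, hcim]
    ring
  rw [hdetK]
  rw [← Complex.sq_norm]
  ring

end
end

section
/- Let m ∈ ℕ, let W ⊆ ℝ^m × ℝ^m be open (with coordinates (x,y) = (x₁,…,x_m,y₁,…,y_m)), and let u, v : W → ℝ be twice continuously differentiable functions satisfying the Cauchy–Riemann equations ∂u/∂x_j = ∂v/∂y_j and ∂u/∂y_j = −∂v/∂x_j on W for all 1 ≤ j ≤ m. Then for all θ₁, θ₂ ∈ ℝ and all p ∈ W: det(θ₁ u''(p) + θ₂ v''(p)) = (θ₁² + θ₂²)^m · det u''(p), where u''(p) and v''(p) denote the 2m×2m Hessian matrices of u and v at p in the variables (x₁,…,x_m,y₁,…,y_m). -/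
open scoped BigOperators

noncomputable section

/-- Determinant of the scalar "complex-structure" block matrix. -/
lemma det_block_scalar (m : ℕ) (θ₁ θ₂ : ℝ) :
    Matrix.det (Matrix.fromBlocks (θ₁ • (1 : Matrix (Fin m) (Fin m) ℝ))
      (θ₂ • (1 : Matrix (Fin m) (Fin m) ℝ)) (-(θ₂ • (1 : Matrix (Fin m) (Fin m) ℝ)))
      (θ₁ • (1 : Matrix (Fin m) (Fin m) ℝ))) = (θ₁ ^ 2 + θ₂ ^ 2) ^ m := by
  have key : ∀ θ : ℝ, θ ≠ 0 →
      Matrix.det (Matrix.fromBlocks (θ • (1 : Matrix (Fin m) (Fin m) ℝ))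
        (θ₂ • (1 : Matrix (Fin m) (Fin m) ℝ)) (-(θ₂ • (1 : Matrix (Fin m) (Fin m) ℝ)))
        (θ • (1 : Matrix (Fin m) (Fin m) ℝ))) = (θ ^ 2 + θ₂ ^ 2) ^ m := by
    intro θ hθ
    have hinv : (θ • (1 : Matrix (Fin m) (Fin m) ℝ)) * (θ⁻¹ • 1) = 1 := by
      rw [Matrix.smul_mul, Matrix.mul_smul, mul_one, smul_smul, mul_inv_cancel₀ hθ, one_smul]
    have hinv' : (θ⁻¹ • (1 : Matrix (Fin m) (Fin m) ℝ)) * (θ • 1) = 1 := by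
      rw [Matrix.smul_mul, Matrix.mul_smul, mul_one, smul_smul, inv_mul_cancel₀ hθ, one_smul]
    letI : Invertible (θ • (1 : Matrix (Fin m) (Fin m) ℝ)) :=
      ⟨θ⁻¹ • 1, hinv', hinv⟩
    rw [Matrix.det_fromBlocks₁₁]
    have hI : ⅟ (θ • (1 : Matrix (Fin m) (Fin m) ℝ)) = θ⁻¹ • 1 := rfl
    rw [hI]
    have : (θ • (1 : Matrix (Fin m) (Fin m) ℝ)) - (-(θ₂ • 1)) * (θ⁻¹ • 1) * (θ₂ • 1)
        = (θ + θ₂ * θ₂ * θ⁻¹) • 1 := by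
      rw [Matrix.neg_mul, Matrix.neg_mul, Matrix.smul_mul, Matrix.mul_smul, Matrix.smul_mul,
        Matrix.mul_smul, mul_one, mul_one, sub_neg_eq_add, smul_smul, smul_smul, add_smul]
    rw [this, Matrix.det_smul, Matrix.det_smul, Matrix.det_one, mul_one, mul_one,
      Fintype.card_fin, ← mul_pow]
    congr 1
    field_simp
  rcases eq_or_ne θ₁ 0 with rfl | h
  · have hf : Continuous fun θ : ℝ =>
        Matrix.det (Matrix.fromBlocks (θ • (1 : Matrix (Fin m) (Fin m) ℝ))
          (θ₂ • (1 : Matrix (Fin m) (Fin m) ℝ)) (-(θ₂ • (1 : Matrix (Fin m) (Fin m) ℝ)))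
          (θ • (1 : Matrix (Fin m) (Fin m) ℝ))) := by
      apply Continuous.matrix_det
      apply continuous_matrix
      intro i j
      cases i <;> cases j <;>
        simp only [Matrix.fromBlocks_apply₁₁, Matrix.fromBlocks_apply₁₂,
          Matrix.fromBlocks_apply₂₁, Matrix.fromBlocks_apply₂₂, Matrix.smul_apply,
          Matrix.neg_apply, smul_eq_mul] <;> fun_prop
    have hg : Continuous fun θ : ℝ => (θ ^ 2 + θ₂ ^ 2) ^ m := by fun_prop
    have := Continuous.ext_on (dense_compl_singleton (0 : ℝ)) hf hg
      (fun θ hθ => key θ hθ)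
    exact congrFun this 0
  · exact key θ₁ h

/-- the Hessian pencil determinant identity for a pair of C² functions satisfying
the Cauchy–Riemann equations. -/
theorem statement3
    (m : ℕ) (W : Set ((Fin m → ℝ) × (Fin m → ℝ))) (hWopen : IsOpen W)
    (u v : (Fin m → ℝ) × (Fin m → ℝ) → ℝ)
    (hu : ContDiffOn ℝ 2 u W) (hv : ContDiffOn ℝ 2 v W)
    (hCR1 : ∀ p ∈ W, ∀ j : Fin m,
      fderiv ℝ u p (eb (Sum.inl j)) = fderiv ℝ v p (eb (Sum.inr j)))
    (hCR2 : ∀ p ∈ W, ∀ j : Fin m,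
      fderiv ℝ u p (eb (Sum.inr j)) = - fderiv ℝ v p (eb (Sum.inl j))) :
    ∀ (θ₁ θ₂ : ℝ), ∀ p ∈ W,
      Matrix.det (θ₁ • hess2 u p + θ₂ • hess2 v p)
        = (θ₁ ^ 2 + θ₂ ^ 2) ^ m * Matrix.det (hess2 u p) := by
  intro θ₁ θ₂ p hp
  have hmem : W ∈ nhds p := hWopen.mem_nhds hp
  -- the complex structure matrix
  set J : Matrix (Fin m ⊕ Fin m) (Fin m ⊕ Fin m) ℝ := Matrix.fromBlocks 0 1 (-1) 0 with hJ
  have hvJ : hess2 v p = hess2 u p * J := by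
    have h1 : ∀ (i : Fin m ⊕ Fin m) (j : Fin m),
        hess2 v p i (Sum.inr j) = hess2 u p i (Sum.inl j) := by
      intro i j
      have : (fun q => fderiv ℝ v q (eb (Sum.inr j)))
          =ᶠ[nhds p] (fun q => fderiv ℝ u q (eb (Sum.inl j))) :=
        Filter.eventually_of_mem hmem fun q hq => (hCR1 q hq j).symm
      simp only [hess2, Matrix.of_apply, this.fderiv_eq]
    have h2 : ∀ (i : Fin m ⊕ Fin m) (j : Fin m),
        hess2 v p i (Sum.inl j) = - hess2 u p i (Sum.inr j) := by
      intro i j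
      have he : (fun q => fderiv ℝ v q (eb (Sum.inl j)))
          =ᶠ[nhds p] (fun q => - fderiv ℝ u q (eb (Sum.inr j))) :=
        Filter.eventually_of_mem hmem fun q hq => by
          have := hCR2 q hq j
          simpa [neg_eq_iff_eq_neg] using this.symm
      simp only [hess2, Matrix.of_apply, he.fderiv_eq, fderiv_fun_neg,
        ContinuousLinearMap.neg_apply]
    ext i j
    rw [Matrix.mul_apply]
    cases j with
    | inl j =>
      rw [Fintype.sum_sum_type]
      simp [hJ, Matrix.one_apply, h2 i j]
    | inr j =>
      rw [Fintype.sum_sum_type]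
      simp [hJ, Matrix.one_apply, h1 i j]
  have hfactor : θ₁ • hess2 u p + θ₂ • hess2 v p
      = hess2 u p * (θ₁ • (1 : Matrix (Fin m ⊕ Fin m) (Fin m ⊕ Fin m) ℝ) + θ₂ • J) := by
    rw [hvJ, Matrix.mul_add, Matrix.mul_smul, Matrix.mul_one, Matrix.mul_smul]
  have hblock : θ₁ • (1 : Matrix (Fin m ⊕ Fin m) (Fin m ⊕ Fin m) ℝ) + θ₂ • J
      = Matrix.fromBlocks (θ₁ • (1 : Matrix (Fin m) (Fin m) ℝ))
        (θ₂ • (1 : Matrix (Fin m) (Fin m) ℝ)) (-(θ₂ • (1 : Matrix (Fin m) (Fin m) ℝ)))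
        (θ₁ • (1 : Matrix (Fin m) (Fin m) ℝ)) := by
    rw [hJ, ← Matrix.fromBlocks_one, Matrix.fromBlocks_smul, Matrix.fromBlocks_smul,
      Matrix.fromBlocks_add]
    simp
  rw [hfactor, Matrix.det_mul, hblock, det_block_scalar, mul_comm]

end
end

section
/- There exist c > 0 and Q₀ ∈ ℕ such that for every integer Q ≥ Q₀, the number of tuples (p₁, p₂, p₃, p₄, q) ∈ ℤ⁴ × ℤ with 1 ≤ q ≤ Q, |p₁| < q, |p₂| < q, q·p₃ = p₁² − p₂², and q·p₄ = 2·p₁·p₂ is at least c · Q^{3/2}. Equivalently, the number of pairs (p, q) ∈ ℤ⁴ × ℤ with 1 ≤ q ≤ Q such that p/q lies on the real surface {(x, y, x² − y², 2xy) : −1 < x, y < 1} ⊆ ℝ⁴ is at least c · Q^{3/2}. -/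
noncomputable section
set_option maxHeartbeats 1000000

/-- lower bound for the number of rational points with denominator at most `Q`
on the complex parabola `{(z, z²)}`, viewed as a real codimension-2 surface in `ℝ⁴`. -/
theorem statement10 :
    ∃ c : ℝ, 0 < c ∧ ∃ Q₀ : ℕ, ∀ Q : ℕ, Q₀ ≤ Q →
      c * (Q : ℝ) ^ ((3 : ℝ) / 2) ≤
        (Set.ncard {t : (ℤ × ℤ × ℤ × ℤ) × ℤ |
          1 ≤ t.2 ∧ t.2 ≤ (Q : ℤ) ∧ |t.1.1| < t.2 ∧ |t.1.2.1| < t.2 ∧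
          t.2 * t.1.2.2.1 = t.1.1 ^ 2 - t.1.2.1 ^ 2 ∧
          t.2 * t.1.2.2.2 = 2 * t.1.1 * t.1.2.1} : ℝ) := by
  refine ⟨1/256, by norm_num, 4, fun Q hQ => ?_⟩
  set S : Set ((ℤ × ℤ × ℤ × ℤ) × ℤ) := {t : (ℤ × ℤ × ℤ × ℤ) × ℤ |
          1 ≤ t.2 ∧ t.2 ≤ (Q : ℤ) ∧ |t.1.1| < t.2 ∧ |t.1.2.1| < t.2 ∧
          t.2 * t.1.2.2.1 = t.1.1 ^ 2 - t.1.2.1 ^ 2 ∧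
          t.2 * t.1.2.2.2 = 2 * t.1.1 * t.1.2.1} with hS
  set M := Nat.sqrt Q with hMdef
  have hM2 : 2 ≤ M := Nat.le_sqrt.mpr (by omega)
  set K := M / 2 with hKdef
  have hK1 : 1 ≤ K := by omega
  have hKM : K ≤ M := by omega
  set f : ℕ × ℕ × ℕ → (ℤ × ℤ × ℤ × ℤ) × ℤ :=
    fun t => (((t.2.1 : ℤ) * t.1, (t.2.2 : ℤ) * t.1,
      (t.2.1 : ℤ)^2 - (t.2.2 : ℤ)^2, 2 * (t.2.1 : ℤ) * t.2.2), (t.1 : ℤ)^2) with hf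
  set D : Finset (ℕ × ℕ × ℕ) := Finset.Icc K M ×ˢ Finset.range K ×ˢ Finset.range K with hD
  -- injectivity
  have hinj : Set.InjOn f D := by
    rintro ⟨m, a, b⟩ hm ⟨m', a', b'⟩ hm' heq
    simp only [hD, Finset.coe_product, Set.mem_prod, Finset.mem_coe, Finset.mem_Icc,
      Finset.mem_range] at hm hm'
    simp only [hf, Prod.mk.injEq] at heq
    obtain ⟨⟨h1, h2, h3, h4⟩, h5⟩ := heq
    have hmm : m = m' := by
      have : (m : ℤ) = m' := by nlinarith [h5, Int.natCast_nonneg m, Int.natCast_nonneg m']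
      exact_mod_cast this
    subst hmm
    have hm0 : (m : ℤ) ≠ 0 := Int.natCast_ne_zero.mpr (by omega)
    have ha : a = a' := by
      have : (a : ℤ) = a' := mul_right_cancel₀ hm0 h1
      exact_mod_cast this
    have hb : b = b' := by
      have : (b : ℤ) = b' := mul_right_cancel₀ hm0 h2
      exact_mod_cast this
    simp [ha, hb]
  -- image lands in S
  have hsub : ∀ t ∈ D, f t ∈ S := by
    rintro ⟨m, a, b⟩ hm
    simp only [hD, Finset.mem_product, Finset.mem_Icc, Finset.mem_range] at hm
    obtain ⟨⟨hKm, hmM⟩, ha, hb⟩ := hm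
    have hm1 : 1 ≤ m := le_trans hK1 hKm
    have ham : a < m := lt_of_lt_of_le ha hKm
    have hbm : b < m := lt_of_lt_of_le hb hKm
    have hmQ : m * m ≤ Q := Nat.le_sqrt.mp hmM
    simp only [hS, hf, Set.mem_setOf_eq]
    refine ⟨?_, ?_, ?_, ?_, by ring, by ring⟩
    · have : (1 : ℤ) ≤ m := by exact_mod_cast hm1
      nlinarith
    · have : ((m * m : ℕ) : ℤ) ≤ (Q : ℤ) := by exact_mod_cast hmQ
      push_cast at this
      nlinarith
    · rw [abs_of_nonneg (by positivity)]
      have ha' : (a : ℤ) < m := by exact_mod_cast ham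
      have hm' : (0 : ℤ) < m := by exact_mod_cast hm1
      nlinarith
    · rw [abs_of_nonneg (by positivity)]
      have hb' : (b : ℤ) < m := by exact_mod_cast hbm
      have hm' : (0 : ℤ) < m := by exact_mod_cast hm1
      nlinarith
  -- S is finite
  have hfin : S.Finite := by
    have hproj : Set.InjOn (fun t : (ℤ × ℤ × ℤ × ℤ) × ℤ => (t.1.1, t.1.2.1, t.2)) S := by
      rintro ⟨⟨p1, p2, p3, p4⟩, q⟩ ht ⟨⟨p1', p2', p3', p4'⟩, q'⟩ ht' heq
      simp only [Prod.mk.injEq] at heq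
      obtain ⟨e1, e2, e5⟩ := heq
      simp only [hS, Set.mem_setOf_eq] at ht ht'
      obtain ⟨hq1, _, _, _, he3, he4⟩ := ht
      obtain ⟨_, _, _, _, he3', he4'⟩ := ht'
      subst e1; subst e2; subst e5
      have hq0 : q ≠ 0 := by omega
      have : p3 = p3' := mul_left_cancel₀ hq0 (he3.trans he3'.symm)
      have h4 : p4 = p4' := mul_left_cancel₀ hq0 (he4.trans he4'.symm)
      rw [this, h4]
    apply Set.Finite.of_finite_image ?_ hproj
    apply Set.Finite.subset
      (((Set.finite_Icc (-(Q:ℤ)) Q).prod ((Set.finite_Icc (-(Q:ℤ)) Q).prod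
        (Set.finite_Icc 1 (Q:ℤ)))))
    rintro x ⟨⟨⟨p1, p2, p3, p4⟩, q⟩, ht, rfl⟩
    simp only [hS, Set.mem_setOf_eq] at ht
    obtain ⟨hq1, hqQ, hp1, hp2, _, _⟩ := ht
    have b1 := abs_lt.mp hp1
    have b2 := abs_lt.mp hp2
    simp only [Set.mem_prod, Set.mem_Icc]
    exact ⟨⟨by omega, by omega⟩, ⟨by omega, by omega⟩, hq1, hqQ⟩
  -- count
  have hsubset : ↑(D.image f) ⊆ S := by
    intro x hx
    simp only [Finset.coe_image, Set.mem_image, Finset.mem_coe] at hx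
    obtain ⟨t, ht, rfl⟩ := hx
    exact hsub t ht
  have hcount : ((M + 1 - K) * (K * K) : ℕ) ≤ S.ncard := by
    have h1 : (D.image f).card = D.card := Finset.card_image_of_injOn hinj
    have h2 : D.card = (M + 1 - K) * (K * K) := by
      simp [hD, Finset.card_product, Nat.card_Icc]
    calc (M + 1 - K) * (K * K) = ((D.image f : Finset _) : Set _).ncard := by
            rw [Set.ncard_coe_finset, h1, h2]
      _ ≤ S.ncard := Set.ncard_le_ncard hsubset hfin
  -- real arithmetic
  have hMQ : (Q : ℝ) < ((M : ℝ) + 1)^2 := by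
    have h0 : Q < (M + 1) * (M + 1) := by
      simpa [pow_two, Nat.succ_eq_add_one, hMdef] using Nat.lt_succ_sqrt' Q
    have : (Q : ℝ) < ((M + 1) * (M + 1) : ℕ) := by exact_mod_cast h0
    push_cast at this
    nlinarith
  have hrpow : (Q : ℝ) ^ ((3 : ℝ)/2) ≤ ((M : ℝ) + 1)^3 := by
    have h0 : (0:ℝ) ≤ (Q:ℝ) := by positivity
    have h1 : (Q : ℝ) ^ ((3 : ℝ)/2) ≤ (((M : ℝ) + 1)^2) ^ ((3 : ℝ)/2) :=
      Real.rpow_le_rpow h0 hMQ.le (by norm_num)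
    calc (Q : ℝ) ^ ((3 : ℝ)/2) ≤ (((M : ℝ) + 1)^2) ^ ((3 : ℝ)/2) := h1
      _ = ((M : ℝ) + 1)^3 := by
          rw [← Real.rpow_natCast ((M : ℝ) + 1) 2, ← Real.rpow_mul (by positivity)]
          rw [show ((2:ℕ):ℝ) * ((3:ℝ)/2) = ((3:ℕ):ℝ) by norm_num, Real.rpow_natCast]
  -- combine
  have hcountR : (((M + 1 - K) * (K * K) : ℕ) : ℝ) ≤ (S.ncard : ℝ) := by exact_mod_cast hcount
  have hcast : (((M + 1 - K) * (K * K) : ℕ) : ℝ) = ((M:ℝ) + 1 - K) * ((K:ℝ) * K) := by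
    have : K ≤ M + 1 := by omega
    push_cast [Nat.cast_sub this]
    ring
  have hKreal1 : 2 * (K : ℝ) ≤ M := by exact_mod_cast (by omega : 2 * K ≤ M)
  have hKreal2 : (M : ℝ) ≤ 2 * K + 1 := by exact_mod_cast (by omega : M ≤ 2 * K + 1)
  have hKreal3 : (1 : ℝ) ≤ K := by exact_mod_cast hK1
  have key : ((M : ℝ) + 1)^3 ≤ 256 * (((M:ℝ) + 1 - K) * ((K:ℝ) * K)) := by
    nlinarith [sq_nonneg ((K:ℝ)), sq_nonneg ((M:ℝ) - 2*K), hKreal3]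
  rw [hcast] at hcountR
  nlinarith [hrpow, hcountR, key]

end
end

section
/- There exist c > 0 and Q₀ ∈ ℕ such that for every integer Q ≥ Q₀, the number of distinct complex numbers z with |ℜz| < 1 and |ℑz| < 1 for which there exists q ∈ ℤ[i] with 0 < |q|∞ ≤ Q, q·z ∈ ℤ[i] and q·z² ∈ ℤ[i], is at least c · Q². (Each such z yields a distinct Gaussian rational point (z, z²) on the complex parabola ℙ¹_ℂ := {(z, z²) : |ℜz| < 1, |ℑz| < 1} ⊆ ℂ², counted by the Gaussian rational counting function at δ = 0.) -/
noncomputable section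

/-- The `ℓ^∞` norm `max(|ℜz|, |ℑz|)` of a complex number. -/
def cnorm (z : ℂ) : ℝ := max |z.re| |z.im|

/-- `z ∈ ℂ` is a Gaussian integer. -/
def IsGaussInt (z : ℂ) : Prop := ∃ a b : ℤ, z = (a : ℂ) + (b : ℂ) * Complex.I

open GaussianInt

local notation "ℤ[i]" => GaussianInt

lemma gnorm_def (x : ℤ[i]) : Zsqrtd.norm x = x.re * x.re + x.im * x.im := by
  simp only [Zsqrtd.norm]; ring

/-- a finset of Gaussian integers containing all of norm at most `R`. -/
def gball (R : ℝ) : Finset ℤ[i] :=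
  ((Finset.Icc (-⌊Real.sqrt R⌋) ⌊Real.sqrt R⌋) ×ˢ
    (Finset.Icc (-⌊Real.sqrt R⌋) ⌊Real.sqrt R⌋)).image fun p => ⟨p.1, p.2⟩

lemma mem_gball {x : ℤ[i]} {R : ℝ} (h : ((Zsqrtd.norm x : ℤ) : ℝ) ≤ R) : x ∈ gball R := by
  have key : ∀ a : ℤ, ((a : ℝ)) ^ 2 ≤ R → a ∈ Finset.Icc (-⌊Real.sqrt R⌋) ⌊Real.sqrt R⌋ := by
    intro a ha
    have h1 : |(a : ℝ)| ≤ Real.sqrt R := by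
      rw [← Real.sqrt_sq_eq_abs]; exact Real.sqrt_le_sqrt ha
    rw [abs_le] at h1
    rw [Finset.mem_Icc]
    refine ⟨neg_le.mpr (Int.le_floor.mpr ?_), Int.le_floor.mpr h1.2⟩
    push_cast
    linarith [h1.1]
  have hre : ((x.re : ℤ) : ℝ) ^ 2 ≤ R := by
    rw [gnorm_def] at h; push_cast at h ⊢; nlinarith [sq_nonneg ((x.im : ℤ) : ℝ)]
  have him : ((x.im : ℤ) : ℝ) ^ 2 ≤ R := by
    rw [gnorm_def] at h; push_cast at h ⊢; nlinarith [sq_nonneg ((x.re : ℤ) : ℝ)]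
  exact Finset.mem_image.mpr ⟨(x.re, x.im), Finset.mem_product.mpr ⟨key _ hre, key _ him⟩, rfl⟩

lemma card_gball {R : ℝ} (h : 1 ≤ R) : ((gball R).card : ℝ) ≤ 9 * R := by
  have h0 : (0:ℝ) ≤ R := le_trans zero_le_one h
  have hs1 : 1 ≤ Real.sqrt R := by
    rw [show (1:ℝ) = Real.sqrt 1 by simp]; exact Real.sqrt_le_sqrt h
  have hf : (0:ℤ) ≤ ⌊Real.sqrt R⌋ := by positivity
  have hcard : (gball R).card ≤ ((2 * ⌊Real.sqrt R⌋ + 1).toNat) ^ 2 := by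
    refine le_trans Finset.card_image_le ?_
    rw [Finset.card_product, Int.card_Icc]
    have : (⌊Real.sqrt R⌋ + 1 - -⌊Real.sqrt R⌋) = 2 * ⌊Real.sqrt R⌋ + 1 := by ring
    rw [this]; nlinarith [((2 * ⌊Real.sqrt R⌋ + 1).toNat)]
  have hc2 : (((2 * ⌊Real.sqrt R⌋ + 1).toNat : ℤ) : ℝ) ≤ 3 * Real.sqrt R := by
    rw [Int.toNat_of_nonneg (by omega)]
    push_cast
    have := Int.floor_le (Real.sqrt R)
    linarith
  have hsq : Real.sqrt R * Real.sqrt R = R := Real.mul_self_sqrt h0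
  calc ((gball R).card : ℝ) ≤ (((2 * ⌊Real.sqrt R⌋ + 1).toNat : ℤ) : ℝ) ^ 2 := by
        exact_mod_cast hcard
    _ ≤ (3 * Real.sqrt R) ^ 2 := by
        have h1 : (0:ℝ) ≤ (((2 * ⌊Real.sqrt R⌋ + 1).toNat : ℤ) : ℝ) := by positivity
        nlinarith [hc2]
    _ ≤ 9 * R := by nlinarith



lemma frac_determines {s w σ ω : ℤ[i]} (hs : s ≠ 0) (hσ : σ ≠ 0) (hcop : IsCoprime σ ω)
    (h : (toComplex w) / (toComplex s) = (toComplex ω) / (toComplex σ)) :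
    ∃ t : ℤ[i], s = σ * t ∧ w = ω * t := by
  have hs0 : (toComplex s) ≠ 0 := by simpa using hs
  have hσ0 : (toComplex σ) ≠ 0 := by simpa using hσ
  rw [div_eq_div_iff hs0 hσ0] at h
  have hint : w * σ = ω * s := by
    rw [← toComplex_inj, map_mul, map_mul]; exact h
  have hdvd : σ ∣ s := hcop.dvd_of_dvd_mul_left ⟨w, by rw [← hint]; ring⟩
  obtain ⟨t, ht⟩ := hdvd
  refine ⟨t, ht, mul_right_cancel₀ hσ ?_⟩
  rw [hint, ht]; ring



set_option maxHeartbeats 2000000 in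
/-- lower bound for the number of Gaussian rational points on the complex
parabola with denominator of `|·|∞`-norm at most `Q`. -/
theorem statement11 :
    ∃ c : ℝ, 0 < c ∧ ∃ Q₀ : ℕ, ∀ Q : ℕ, Q₀ ≤ Q →
      c * (Q : ℝ) ^ 2 ≤
        (Set.ncard {z : ℂ | |z.re| < 1 ∧ |z.im| < 1 ∧
          ∃ q : ℂ, IsGaussInt q ∧ 0 < cnorm q ∧ cnorm q ≤ (Q : ℝ) ∧
            IsGaussInt (q * z) ∧ IsGaussInt (q * z ^ 2)} : ℝ) := by
  classical
  refine ⟨(6879707136 : ℝ)⁻¹, by norm_num, 1000000, fun Q hQ => ?_⟩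
  set S := {z : ℂ | |z.re| < 1 ∧ |z.im| < 1 ∧
          ∃ q : ℂ, IsGaussInt q ∧ 0 < cnorm q ∧ cnorm q ≤ (Q : ℝ) ∧
            IsGaussInt (q * z) ∧ IsGaussInt (q * z ^ 2)} with hSdef
  set N := Nat.sqrt (Q / 8) with hNdef
  -- basic size facts about N
  have hN353 : 353 ≤ N := by
    have : 353 * 353 ≤ Q / 8 := by omega
    exact Nat.le_sqrt.mpr this
  have hN8 : 8 * N ^ 2 ≤ Q := by
    have h1 : N ^ 2 ≤ Q / 8 := Nat.sqrt_le' _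
    omega
  have hQ64 : (Q : ℝ) ≤ 64 * (N : ℝ) ^ 2 := by
    have h1 : Q / 8 < (N + 1) ^ 2 := Nat.lt_succ_sqrt' _
    have h2 : Q < 8 * (N + 1) ^ 2 + 8 := by omega
    have h3 : Q ≤ 64 * N ^ 2 := by nlinarith
    exact_mod_cast h3
  have hN0 : (0:ℝ) < (N:ℝ) := by exact_mod_cast (by omega : 0 < N)
  -- the boxes of Gaussian integers
  set mk2 : ℤ × ℤ → ℤ[i] := fun p => ⟨p.1, p.2⟩ with hmk2
  have hmk2inj : Function.Injective mk2 := by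
    intro a b h
    exact Prod.ext (congrArg Zsqrtd.re h) (congrArg Zsqrtd.im h)
  set sBox : Finset ℤ[i] := ((Finset.Ioc (N:ℤ) (2*N)) ×ˢ (Finset.Ioc (N:ℤ) (2*N))).image mk2
    with hsBoxdef
  set wBox : Finset ℤ[i] := ((Finset.Ioc (0:ℤ) N) ×ˢ (Finset.Ioc (0:ℤ) N)).image mk2
    with hwBoxdef
  have hsBoxMem : ∀ s ∈ sBox, (N:ℤ) < s.re ∧ s.re ≤ 2*N ∧ (N:ℤ) < s.im ∧ s.im ≤ 2*N := by
    intro s hs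
    obtain ⟨p, hp, rfl⟩ := Finset.mem_image.mp hs
    simp only [Finset.mem_product, Finset.mem_Ioc] at hp
    exact ⟨hp.1.1, hp.1.2, hp.2.1, hp.2.2⟩
  have hwBoxMem : ∀ w ∈ wBox, (0:ℤ) < w.re ∧ w.re ≤ N ∧ (0:ℤ) < w.im ∧ w.im ≤ N := by
    intro w hw
    obtain ⟨p, hp, rfl⟩ := Finset.mem_image.mp hw
    simp only [Finset.mem_product, Finset.mem_Ioc] at hp
    exact ⟨hp.1.1, hp.1.2, hp.2.1, hp.2.2⟩
  have hsBoxCard : sBox.card = N^2 := by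
    rw [hsBoxdef, Finset.card_image_of_injective _ hmk2inj, Finset.card_product,
      Int.card_Ioc]
    have e1 : ((2*(N:ℤ) - N).toNat) = N := by omega
    rw [e1]; ring
  have hwBoxCard : wBox.card = N^2 := by
    rw [hwBoxdef, Finset.card_image_of_injective _ hmk2inj, Finset.card_product,
      Int.card_Ioc]
    have e1 : (((N:ℤ) - 0).toNat) = N := by omega
    rw [e1]; ring
  have hNz : (0:ℤ) ≤ (N:ℤ) := by positivity
  have hsNorm : ∀ s ∈ sBox, s ≠ 0 ∧ 2*(N:ℤ)^2 < Zsqrtd.norm s ∧ Zsqrtd.norm s ≤ 8*(N:ℤ)^2 := by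
    intro s hs
    obtain ⟨h1, h2, h3, h4⟩ := hsBoxMem s hs
    refine ⟨?_, ?_, ?_⟩
    · intro h; rw [h] at h1; simp at h1; omega
    · rw [gnorm_def]; nlinarith
    · rw [gnorm_def]; nlinarith
  have hwNorm : ∀ w ∈ wBox, w ≠ 0 ∧ Zsqrtd.norm w ≤ 2*(N:ℤ)^2 := by
    intro w hw
    obtain ⟨h1, h2, h3, h4⟩ := hwBoxMem w hw
    refine ⟨?_, ?_⟩
    · intro h; rw [h] at h1; simp at h1
    · rw [gnorm_def]; nlinarith
  set P : Finset (ℤ[i] × ℤ[i]) := sBox ×ˢ wBox with hPdef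
  have hPcard : P.card = N^2 * N^2 := by
    rw [hPdef, Finset.card_product, hsBoxCard, hwBoxCard]
  set f : ℤ[i] × ℤ[i] → ℂ := fun p => toComplex p.2 / toComplex p.1 with hfdef
  have cnorm_pos : ∀ u : ℂ, u ≠ 0 → 0 < cnorm u := by
    intro u hu
    by_contra hc
    push_neg at hc
    have h1 : |u.re| ≤ 0 := le_trans (le_max_left _ _) hc
    have h2 : |u.im| ≤ 0 := le_trans (le_max_right _ _) hc
    exact hu (Complex.ext (by simpa using le_antisymm h1 (abs_nonneg _))
      (by simpa using le_antisymm h2 (abs_nonneg _)))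
  -- every fraction from P lies in S
  have himg : ∀ p ∈ P, f p ∈ S := by
    rintro ⟨s, w⟩ hp
    rw [hPdef, Finset.mem_product] at hp
    obtain ⟨hs, hw⟩ := hp
    obtain ⟨hs0, hslb, hsub⟩ := hsNorm s hs
    obtain ⟨hw0, hwub⟩ := hwNorm w hw
    obtain ⟨hsr1, hsr2, hsi1, hsi2⟩ := hsBoxMem s hs
    have hsC : toComplex s ≠ 0 := by simpa using hs0
    have hspos : (0:ℝ) < (Zsqrtd.norm s : ℝ) := by
      have : (0:ℤ) < Zsqrtd.norm s := by nlinarith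
      exact_mod_cast this
    set z : ℂ := toComplex w / toComplex s with hzdef
    have hnormlt : Complex.normSq z < 1 := by
      rw [hzdef, map_div₀ Complex.normSq]
      rw [show Complex.normSq (toComplex w) = ((Zsqrtd.norm w : ℤ) : ℝ) from
        (intCast_real_norm w).symm]
      rw [show Complex.normSq (toComplex s) = ((Zsqrtd.norm s : ℤ) : ℝ) from
        (intCast_real_norm s).symm]
      rw [div_lt_one hspos]
      have : Zsqrtd.norm w < Zsqrtd.norm s := by nlinarith
      exact_mod_cast this
    have hnormsqz : z.re * z.re + z.im * z.im < 1 := by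
      rw [← Complex.normSq_apply]; exact hnormlt
    have hzre : |z.re| < 1 := by
      rw [abs_lt]; constructor <;> nlinarith [mul_self_nonneg z.re, mul_self_nonneg z.im]
    have hzim : |z.im| < 1 := by
      rw [abs_lt]; constructor <;> nlinarith [mul_self_nonneg z.re, mul_self_nonneg z.im]
    set q : ℂ := toComplex (s*s) with hqdef
    have hq0 : q ≠ 0 := by
      rw [hqdef]; simpa using mul_ne_zero hs0 hs0
    have hsqre : (s*s).re = s.re*s.re - s.im*s.im := by
      simp [Zsqrtd.re_mul]; ring
    have hsqim : (s*s).im = 2*(s.re*s.im) := by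
      simp [Zsqrtd.im_mul]; ring
    have hreint : |(s*s).re| ≤ (8*N^2 : ℤ) := by
      rw [hsqre]; rw [abs_le]; constructor <;> nlinarith
    have himint : |(s*s).im| ≤ (8*N^2 : ℤ) := by
      rw [hsqim]; rw [abs_le]; constructor <;> nlinarith
    have h8Q : ((8*N^2 : ℤ) : ℝ) ≤ (Q : ℝ) := by exact_mod_cast hN8
    have hcnq : cnorm q ≤ (Q : ℝ) := by
      have e1 : q.re = (((s*s).re : ℤ) : ℝ) := (intCast_re _).symm
      have e2 : q.im = (((s*s).im : ℤ) : ℝ) := (intCast_im _).symm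
      apply max_le
      · rw [e1, ← Int.cast_abs]
        refine le_trans ?_ h8Q
        exact_mod_cast hreint
      · rw [e2, ← Int.cast_abs]
        refine le_trans ?_ h8Q
        exact_mod_cast himint
    have hqz : q * z = toComplex (s*w) := by
      rw [hqdef, hzdef, map_mul, map_mul]
      field_simp
    have hqz2 : q * z^2 = toComplex (w*w) := by
      rw [hqdef, hzdef, map_mul, map_mul]
      field_simp
    refine ⟨hzre, hzim, q, ⟨(s*s).re, (s*s).im, toComplex_def _⟩, cnorm_pos q hq0, hcnq,
      ⟨(s*w).re, (s*w).im, by rw [hqz]; exact toComplex_def _⟩,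
      ⟨(w*w).re, (w*w).im, by rw [hqz2]; exact toComplex_def _⟩⟩
  -- S is finite
  have hQR : (0:ℝ) ≤ (Q:ℝ) := by positivity
  have hfin : S.Finite := by
    set box1 : Finset ℤ[i] := ((Finset.Icc (-(Q:ℤ)) Q) ×ˢ (Finset.Icc (-(Q:ℤ)) Q)).image mk2
      with hbox1
    set box2 : Finset ℤ[i] :=
      ((Finset.Icc (-(2*Q:ℤ)) (2*Q)) ×ˢ (Finset.Icc (-(2*Q:ℤ)) (2*Q))).image mk2 with hbox2
    refine Set.Finite.subset ((box1 ×ˢ box2).finite_toSet.image f) ?_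
    intro z hz
    obtain ⟨hre, him, q, ⟨a, b, hab⟩, hpos, hle, ⟨u, v, huv⟩, -⟩ := hz
    have hq0 : q ≠ 0 := by
      intro h; rw [h] at hpos; simp [cnorm] at hpos
    have hcn : cnorm q = max |q.re| |q.im| := rfl
    have hza : |q.re| ≤ (Q:ℝ) := le_trans (le_trans (le_max_left _ _) hcn.ge) hle
    have hzb : |q.im| ≤ (Q:ℝ) := le_trans (le_trans (le_max_right _ _) hcn.ge) hle
    have hqre : q.re = (a:ℝ) := by rw [hab]; simp
    have hqim : q.im = (b:ℝ) := by rw [hab]; simp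
    have uval : ((u:ℝ)) = q.re*z.re - q.im*z.im := by
      rw [← Complex.mul_re, huv]; simp
    have vval : ((v:ℝ)) = q.re*z.im + q.im*z.re := by
      rw [← Complex.mul_im, huv]; simp
    obtain ⟨hza1, hza2⟩ := abs_le.mp hza
    obtain ⟨hzb1, hzb2⟩ := abs_le.mp hzb
    obtain ⟨hre1, hre2⟩ := abs_lt.mp hre
    obtain ⟨him1, him2⟩ := abs_lt.mp him
    have hu : |(u:ℝ)| ≤ 2*(Q:ℝ) := by
      rw [uval, abs_le]
      constructor <;> nlinarith [abs_nonneg q.re, abs_nonneg q.im,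
        le_abs_self q.re, neg_abs_le q.re, le_abs_self q.im, neg_abs_le q.im,
        abs_nonneg z.re, le_abs_self z.re, neg_abs_le z.re, le_abs_self z.im, neg_abs_le z.im,
        hre.le, him.le]
    have hv : |(v:ℝ)| ≤ 2*(Q:ℝ) := by
      rw [vval, abs_le]
      constructor <;> nlinarith [abs_nonneg q.re, abs_nonneg q.im,
        le_abs_self q.re, neg_abs_le q.re, le_abs_self q.im, neg_abs_le q.im,
        abs_nonneg z.re, le_abs_self z.re, neg_abs_le z.re, le_abs_self z.im, neg_abs_le z.im,
        hre.le, him.le]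
    have e1 : toComplex (⟨a,b⟩ : ℤ[i]) = q := by rw [toComplex_def']; exact hab.symm
    have e2 : toComplex (⟨u,v⟩ : ℤ[i]) = q * z := by rw [toComplex_def']; exact huv.symm
    refine ⟨((⟨a,b⟩ : ℤ[i]), (⟨u,v⟩ : ℤ[i])), ?_, ?_⟩
    · rw [Finset.coe_product]
      refine ⟨?_, ?_⟩
      · rw [hbox1]
        refine Finset.mem_coe.mpr (Finset.mem_image.mpr ⟨(a, b), ?_, rfl⟩)
        simp only [Finset.mem_product, Finset.mem_Icc]
        have h1 : |a| ≤ (Q:ℤ) := by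
          have : |(a:ℝ)| ≤ (Q:ℝ) := by rwa [← hqre]
          exact_mod_cast (by rwa [← Int.cast_abs] at this : ((|a| : ℤ) : ℝ) ≤ (Q:ℝ))
        have h2 : |b| ≤ (Q:ℤ) := by
          have : |(b:ℝ)| ≤ (Q:ℝ) := by rwa [← hqim]
          exact_mod_cast (by rwa [← Int.cast_abs] at this : ((|b| : ℤ) : ℝ) ≤ (Q:ℝ))
        rw [abs_le] at h1 h2
        exact ⟨⟨h1.1, h1.2⟩, ⟨h2.1, h2.2⟩⟩
      · rw [hbox2]
        refine Finset.mem_coe.mpr (Finset.mem_image.mpr ⟨(u, v), ?_, rfl⟩)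
        simp only [Finset.mem_product, Finset.mem_Icc]
        have h1 : |u| ≤ (2*Q:ℤ) := by
          have h := hu; rw [← Int.cast_abs] at h; exact_mod_cast h
        have h2 : |v| ≤ (2*Q:ℤ) := by
          have h := hv; rw [← Int.cast_abs] at h; exact_mod_cast h
        rw [abs_le] at h1 h2
        exact ⟨⟨h1.1, h1.2⟩, ⟨h2.1, h2.2⟩⟩
    · show f _ = z
      rw [hfdef]
      simp only
      rw [e1, e2, mul_comm q z, mul_div_assoc, div_self hq0, mul_one]
  -- gcd machinery
  letI : GCDMonoid ℤ[i] := EuclideanDomain.gcdMonoid _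
  set g : ℤ[i] × ℤ[i] → ℤ[i] := fun p => GCDMonoid.gcd p.1 p.2 with hgdef
  set σf : ℤ[i] × ℤ[i] → ℤ[i] := fun p => p.1 / g p with hσdef
  set ωf : ℤ[i] × ℤ[i] → ℤ[i] := fun p => p.2 / g p with hωdef
  have hred : ∀ p ∈ P, p.1 = g p * σf p ∧ p.2 = g p * ωf p ∧ IsCoprime (σf p) (ωf p)
      ∧ σf p ≠ 0 ∧ g p ≠ 0 := by
    rintro ⟨s, w⟩ hp
    rw [hPdef, Finset.mem_product] at hp
    have hs0 := (hsNorm _ hp.1).1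
    have hw0 := (hwNorm _ hp.2).1
    have hg0 : GCDMonoid.gcd s w ≠ 0 := gcd_ne_zero_of_left hs0
    exact ⟨(EuclideanDomain.mul_div_cancel' hg0 (gcd_dvd_left s w)).symm,
      (EuclideanDomain.mul_div_cancel' hg0 (gcd_dvd_right s w)).symm,
      isCoprime_div_gcd_div_gcd hw0,
      left_div_gcd_ne_zero hs0, hg0⟩
  have hfred : ∀ p ∈ P, f p = toComplex (ωf p) / toComplex (σf p) := by
    intro p hp
    obtain ⟨e1, e2, -, hσ0, hg0⟩ := hred p hp
    rw [hfdef]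
    simp only
    conv_lhs => rw [e1, e2]
    rw [map_mul, map_mul, mul_div_mul_left _ _ (by simpa using hg0)]
  -- norms of the reduced parts
  have hnormred : ∀ p ∈ P, (1:ℤ) ≤ Zsqrtd.norm (σf p) ∧ Zsqrtd.norm (σf p) ≤ 8*(N:ℤ)^2 ∧
      Zsqrtd.norm (ωf p) ≤ Zsqrtd.norm (σf p) ∧
      Zsqrtd.norm (g p) * Zsqrtd.norm (σf p) = Zsqrtd.norm p.1 := by
    intro p hp
    obtain ⟨e1, e2, -, hσ0, hg0⟩ := hred p hp
    have hpP := hp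
    rw [hPdef, Finset.mem_product] at hpP
    obtain ⟨-, hslb, hsub⟩ := hsNorm _ hpP.1
    obtain ⟨-, hwub⟩ := hwNorm _ hpP.2
    have hmul1 : Zsqrtd.norm (g p) * Zsqrtd.norm (σf p) = Zsqrtd.norm p.1 := by
      rw [← Zsqrtd.norm_mul, ← e1]
    have hmul2 : Zsqrtd.norm (g p) * Zsqrtd.norm (ωf p) = Zsqrtd.norm p.2 := by
      rw [← Zsqrtd.norm_mul, ← e2]
    have hσpos : 0 < Zsqrtd.norm (σf p) := GaussianInt.norm_pos.mpr hσ0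
    have hgpos : 0 < Zsqrtd.norm (g p) := GaussianInt.norm_pos.mpr hg0
    refine ⟨hσpos, ?_, ?_, hmul1⟩
    · nlinarith
    · nlinarith [GaussianInt.norm_nonneg (ωf p)]
  -- uniform bound for the fibers of f over a fixed reduced fraction
  have fiber_bound : ∀ σ ω : ℤ[i], σ ≠ 0 → IsCoprime σ ω →
      (1:ℝ) ≤ 8*(N:ℝ)^2 / ((Zsqrtd.norm σ : ℤ) : ℝ) →
      ∀ B : Finset (ℤ[i] × ℤ[i]), B ⊆ P →
      (∀ p ∈ B, f p = toComplex ω / toComplex σ) →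
      (B.card : ℝ) ≤ 9 * (8*(N:ℝ)^2 / ((Zsqrtd.norm σ : ℤ) : ℝ)) := by
    intro σ ω hσ0 hcop hR B hBP hBf
    have hσpos : (0:ℝ) < ((Zsqrtd.norm σ : ℤ) : ℝ) := by
      exact_mod_cast GaussianInt.norm_pos.mpr hσ0
    have key : ∀ p ∈ B, ∃ t : ℤ[i], p.1 = σ * t ∧ p.2 = ω * t ∧ p.1 / σ = t := by
      intro p hp
      have hpP := hBP hp
      rw [hPdef, Finset.mem_product] at hpP
      obtain ⟨hs0, -, -⟩ := hsNorm _ hpP.1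
      obtain ⟨t, ht1, ht2⟩ := frac_determines hs0 hσ0 hcop (by
        have := hBf p hp; rw [hfdef] at this; exact this)
      exact ⟨t, ht1, ht2, (EuclideanDomain.eq_div_of_mul_eq_right hσ0 ht1.symm).symm⟩
    have hcard : B.card ≤ (gball (8*(N:ℝ)^2 / ((Zsqrtd.norm σ : ℤ) : ℝ))).card := by
      apply Finset.card_le_card_of_injOn (fun p => p.1 / σ)
      · intro p hp
        obtain ⟨t, ht1, ht2, ht3⟩ := key p hp
        have hpP := hBP hp
        rw [hPdef, Finset.mem_product] at hpP
        obtain ⟨-, -, hsub⟩ := hsNorm _ hpP.1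
        simp only [Finset.mem_coe]
        rw [ht3]
        apply mem_gball
        rw [le_div_iff₀ hσpos]
        have : Zsqrtd.norm σ * Zsqrtd.norm t = Zsqrtd.norm p.1 := by
          rw [← Zsqrtd.norm_mul, ← ht1]
        have h2 : Zsqrtd.norm t * Zsqrtd.norm σ ≤ 8*(N:ℤ)^2 := by nlinarith
        exact_mod_cast h2
      · intro p hp p' hp' h
        obtain ⟨t, ht1, ht2, ht3⟩ := key p (Finset.mem_coe.mp hp)
        obtain ⟨t', ht1', ht2', ht3'⟩ := key p' (Finset.mem_coe.mp hp')
        simp only at h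
        rw [ht3, ht3'] at h
        subst h
        exact Prod.ext (by rw [ht1, ht1']) (by rw [ht2, ht2'])
    calc (B.card : ℝ) ≤ ((gball (8*(N:ℝ)^2 / ((Zsqrtd.norm σ : ℤ) : ℝ))).card : ℝ) := by
          exact_mod_cast hcard
      _ ≤ 9 * (8*(N:ℝ)^2 / ((Zsqrtd.norm σ : ℤ) : ℝ)) := card_gball hR
  -- split P according to the size of the reduced denominator
  set T : ℝ := (N:ℝ)^2 / 11664 with hTdef
  have hT1 : (1:ℝ) ≤ T := by
    rw [hTdef]
    rw [le_div_iff₀ (by norm_num : (0:ℝ) < 11664)]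
    have : (353:ℝ) ≤ (N:ℝ) := by exact_mod_cast hN353
    nlinarith
  set Psmall : Finset (ℤ[i] × ℤ[i]) :=
    P.filter (fun p => ((Zsqrtd.norm (σf p) : ℤ) : ℝ) ≤ T) with hPsmalldef
  set Pbig : Finset (ℤ[i] × ℤ[i]) :=
    P.filter (fun p => ¬ ((Zsqrtd.norm (σf p) : ℤ) : ℝ) ≤ T) with hPbigdef
  have hsplit : Psmall.card + Pbig.card = P.card :=
    Finset.card_filter_add_card_filter_not _
  -- bound on the small part
  have hPsmall : (Psmall.card : ℝ) ≤ (N:ℝ)^4 / 2 := by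
    have hmaps : ∀ p ∈ Psmall, σf p ∈ gball T := by
      intro p hp
      rw [hPsmalldef, Finset.mem_filter] at hp
      exact mem_gball hp.2
    have hsum : Psmall.card = ∑ σ ∈ gball T, (Psmall.filter fun p => σf p = σ).card :=
      Finset.card_eq_sum_card_fiberwise hmaps
    have hper : ∀ σ ∈ gball T, ((Psmall.filter fun p => σf p = σ).card : ℝ) ≤ 648*(N:ℝ)^2 := by
      intro σ hσ
      rcases (Psmall.filter fun p => σf p = σ).eq_empty_or_nonempty with he | ⟨p₀, hp₀⟩
      · rw [he]; simp
      · have hp₀' := Finset.mem_filter.mp hp₀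
        have hp₀small := Finset.mem_filter.mp hp₀'.1
        have hp₀P : p₀ ∈ P := hp₀small.1
        have hσeq : σf p₀ = σ := hp₀'.2
        obtain ⟨h1, h2, h3, h4⟩ := hnormred p₀ hp₀P
        obtain ⟨-, -, -, hσ0, -⟩ := hred p₀ hp₀P
        rw [hσeq] at h1 h2 hσ0
        have hσpos : (0:ℝ) < ((Zsqrtd.norm σ : ℤ) : ℝ) := by
          exact_mod_cast GaussianInt.norm_pos.mpr hσ0
        have hσle : ((Zsqrtd.norm σ : ℤ) : ℝ) ≤ 8*(N:ℝ)^2 := by exact_mod_cast h2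
        have hσ1 : (1:ℝ) ≤ ((Zsqrtd.norm σ : ℤ) : ℝ) := by exact_mod_cast h1
        have hcard : (Psmall.filter fun p => σf p = σ).card ≤
            ((gball ((Zsqrtd.norm σ : ℤ) : ℝ)) ×ˢ
             (gball (8*(N:ℝ)^2 / ((Zsqrtd.norm σ : ℤ) : ℝ)))).card := by
          apply Finset.card_le_card_of_injOn (fun p => (ωf p, g p))
          · intro p hp
            have hpf := Finset.mem_filter.mp hp
            have hpP : p ∈ P := (Finset.mem_filter.mp hpf.1).1
            obtain ⟨k1, k2, k3, k4⟩ := hnormred p hpP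
            rw [hpf.2] at k3 k4
            simp only [Finset.mem_coe]
            rw [Finset.mem_product]
            constructor
            · apply mem_gball; exact_mod_cast k3
            · apply mem_gball
              rw [le_div_iff₀ hσpos]
              have hgpos : (1:ℤ) ≤ Zsqrtd.norm (g p) := by
                obtain ⟨-, -, -, -, hg0⟩ := hred p hpP
                exact GaussianInt.norm_pos.mpr hg0
              have hub : Zsqrtd.norm p.1 ≤ 8*(N:ℤ)^2 := by
                have hpP' := hpP
                rw [hPdef, Finset.mem_product] at hpP'
                exact (hsNorm _ hpP'.1).2.2
              have : Zsqrtd.norm (g p) * Zsqrtd.norm σ ≤ 8*(N:ℤ)^2 := by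
                rw [k4]; exact hub
              exact_mod_cast this
          · intro p hp p' hp' h
            have hpf := Finset.mem_filter.mp (Finset.mem_coe.mp hp)
            have hpf' := Finset.mem_filter.mp (Finset.mem_coe.mp hp')
            have hpP : p ∈ P := (Finset.mem_filter.mp hpf.1).1
            have hpP' : p' ∈ P := (Finset.mem_filter.mp hpf'.1).1
            obtain ⟨e1, e2, -, -, -⟩ := hred p hpP
            obtain ⟨e1', e2', -, -, -⟩ := hred p' hpP'
            have hω : ωf p = ωf p' := congrArg Prod.fst h
            have hg : g p = g p' := congrArg Prod.snd h
            refine Prod.ext ?_ ?_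
            · rw [e1, e1', hpf.2, hpf'.2, hg]
            · rw [e2, e2', hω, hg]
        have c1 : ((gball ((Zsqrtd.norm σ : ℤ) : ℝ)).card : ℝ) ≤
            9 * ((Zsqrtd.norm σ : ℤ) : ℝ) := card_gball hσ1
        have c2 : ((gball (8*(N:ℝ)^2 / ((Zsqrtd.norm σ : ℤ) : ℝ))).card : ℝ) ≤
            9 * (8*(N:ℝ)^2 / ((Zsqrtd.norm σ : ℤ) : ℝ)) := by
          apply card_gball
          rw [le_div_iff₀ hσpos]
          nlinarith
        have hprod : (((gball ((Zsqrtd.norm σ : ℤ) : ℝ)) ×ˢ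
             (gball (8*(N:ℝ)^2 / ((Zsqrtd.norm σ : ℤ) : ℝ)))).card : ℝ) ≤ 648*(N:ℝ)^2 := by
          rw [Finset.card_product]
          push_cast
          calc ((gball ((Zsqrtd.norm σ : ℤ) : ℝ)).card : ℝ) *
              ((gball (8*(N:ℝ)^2 / ((Zsqrtd.norm σ : ℤ) : ℝ))).card : ℝ)
              ≤ (9 * ((Zsqrtd.norm σ : ℤ) : ℝ)) *
                (9 * (8*(N:ℝ)^2 / ((Zsqrtd.norm σ : ℤ) : ℝ))) := by
                apply mul_le_mul c1 c2 (Nat.cast_nonneg _) (by positivity)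
            _ = 648*(N:ℝ)^2 := by
                rw [show (9 * ((Zsqrtd.norm σ : ℤ) : ℝ)) *
                    (9 * (8*(N:ℝ)^2 / ((Zsqrtd.norm σ : ℤ) : ℝ))) =
                    81 * (8*(N:ℝ)^2) * (((Zsqrtd.norm σ : ℤ) : ℝ) / ((Zsqrtd.norm σ : ℤ) : ℝ))
                  from by ring, div_self (ne_of_gt hσpos)]
                ring
        calc ((Psmall.filter fun p => σf p = σ).card : ℝ) ≤ _ := by exact_mod_cast hcard
          _ ≤ 648*(N:ℝ)^2 := hprod
    have hTcard : ((gball T).card : ℝ) ≤ 9 * T := card_gball hT1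
    calc (Psmall.card : ℝ) = ∑ σ ∈ gball T, (((Psmall.filter fun p => σf p = σ).card : ℕ) : ℝ) := by
          rw [hsum]; push_cast; rfl
      _ ≤ ∑ _σ ∈ gball T, 648*(N:ℝ)^2 := Finset.sum_le_sum hper
      _ = ((gball T).card : ℝ) * (648*(N:ℝ)^2) := by rw [Finset.sum_const, nsmul_eq_mul]
      _ ≤ (9 * T) * (648*(N:ℝ)^2) := by
          apply mul_le_mul_of_nonneg_right hTcard (by positivity)
      _ = (N:ℝ)^4 / 2 := by rw [hTdef]; field_simp; ring
  -- bound on the fibers over the big part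
  have hbigfib : ∀ z ∈ Pbig.image f, (Pbig.filter fun p => f p = z).card ≤ 839808 := by
    intro z hz
    rcases (Pbig.filter fun p => f p = z).eq_empty_or_nonempty with he | ⟨p₀, hp₀⟩
    · rw [he]; simp
    · have hp₀' := Finset.mem_filter.mp hp₀
      have hp₀big := Finset.mem_filter.mp hp₀'.1
      have hp₀P : p₀ ∈ P := hp₀big.1
      have hσbig : T < ((Zsqrtd.norm (σf p₀) : ℤ) : ℝ) := lt_of_not_ge hp₀big.2
      obtain ⟨-, -, hcop, hσ0, -⟩ := hred p₀ hp₀P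
      obtain ⟨h1, h2, -, -⟩ := hnormred p₀ hp₀P
      have hσpos : (0:ℝ) < ((Zsqrtd.norm (σf p₀) : ℤ) : ℝ) := by
        exact_mod_cast GaussianInt.norm_pos.mpr hσ0
      have hR : (1:ℝ) ≤ 8*(N:ℝ)^2 / ((Zsqrtd.norm (σf p₀) : ℤ) : ℝ) := by
        rw [le_div_iff₀ hσpos]
        have : ((Zsqrtd.norm (σf p₀) : ℤ) : ℝ) ≤ 8*(N:ℝ)^2 := by exact_mod_cast h2
        nlinarith
      have hB := fiber_bound (σf p₀) (ωf p₀) hσ0 hcop hR (Pbig.filter fun p => f p = z)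
        ((Finset.filter_subset _ _).trans (Finset.filter_subset _ _))
        (by
          intro p hp
          have hpf := Finset.mem_filter.mp hp
          rw [hpf.2, ← hp₀'.2]
          exact hfred p₀ hp₀P)
      have hfinal : 9 * (8*(N:ℝ)^2 / ((Zsqrtd.norm (σf p₀) : ℤ) : ℝ)) ≤ 839808 := by
        have hTpos : (0:ℝ) < T := lt_of_lt_of_le one_pos hT1
        have hdiv : 8*(N:ℝ)^2 / ((Zsqrtd.norm (σf p₀) : ℤ) : ℝ) ≤ 8*(N:ℝ)^2 / T := by
          apply div_le_div_of_nonneg_left (by positivity) hTpos hσbig.le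
        have heq : 8*(N:ℝ)^2 / T = 93312 := by
          rw [hTdef, div_div_eq_mul_div,
            show 8*(N:ℝ)^2*11664 = 93312*(N:ℝ)^2 from by ring, mul_div_assoc,
            div_self (ne_of_gt (by nlinarith : (0:ℝ) < (N:ℝ)^2)), mul_one]
        nlinarith
      have : ((Pbig.filter fun p => f p = z).card : ℝ) ≤ 839808 := le_trans hB hfinal
      exact_mod_cast this
  have hPbigcard : Pbig.card ≤ 839808 * (Pbig.image f).card :=
    Finset.card_le_mul_card_image Pbig 839808 hbigfib
  -- assembling everything
  set Zbig := Pbig.image f with hZbigdef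
  have hZS : ↑Zbig ⊆ S := by
    intro z hz
    obtain ⟨p, hp, rfl⟩ := Finset.mem_image.mp (Finset.mem_coe.mp hz)
    exact himg p (Finset.filter_subset _ _ hp)
  have hncard : (Zbig.card : ℝ) ≤ (S.ncard : ℝ) := by
    have h := Set.ncard_le_ncard hZS hfin
    rw [Set.ncard_coe_finset] at h
    exact_mod_cast h
  have hPbigR : ((N:ℝ)^4) / 2 ≤ (Pbig.card : ℝ) := by
    have hPR : (P.card : ℝ) = (N:ℝ)^4 := by
      rw [hPcard]; push_cast; ring
    have : (Psmall.card : ℝ) + (Pbig.card : ℝ) = (N:ℝ)^4 := by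
      rw [← hPR]; exact_mod_cast hsplit
    linarith
  have hZbigR : ((N:ℝ)^4) / 1679616 ≤ (Zbig.card : ℝ) := by
    have : (Pbig.card : ℝ) ≤ 839808 * (Zbig.card : ℝ) := by exact_mod_cast hPbigcard
    linarith
  have hfinal2 : (6879707136 : ℝ)⁻¹ * (Q:ℝ)^2 ≤ ((N:ℝ)^4) / 1679616 := by
    rw [inv_mul_le_iff₀ (by norm_num : (0:ℝ) < 6879707136)]
    nlinarith [mul_le_mul hQ64 hQ64 hQR (by positivity : (0:ℝ) ≤ 64 * (N:ℝ)^2)]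
  calc (6879707136 : ℝ)⁻¹ * (Q:ℝ)^2 ≤ ((N:ℝ)^4) / 1679616 := hfinal2
    _ ≤ (Zbig.card : ℝ) := hZbigR
    _ ≤ (S.ncard : ℝ) := hncard

end
end

section
/- Let n, R ∈ ℕ, let Φ = (Φ₁,…,Φ_R) : ℝ^{n+R} → ℝ^R be smooth (coordinates u = (x, y) ∈ ℝⁿ × ℝ^R), let U ⊆ ℝⁿ be open and f : U → ℝ^R smooth with Φ(x, f(x)) = 0 and det ∂_y Φ(x, f(x)) ≠ 0 for all x ∈ U (∂_y Φ the R×R Jacobian in the last R coordinates). Then for every x ∈ U and every s ∈ ℝ^R, setting t := (∂_y Φ(x, f(x)))ᵀ s ∈ ℝ^R, one has |det ∂_y Φ(x, f(x))|² · |det(Σ_{ℓ=1}^R t_ℓ f_ℓ''(x))| = |det M(x, s)|, where M(x, s) is the (n+2R)×(n+2R) block matrix with upper-left block Σ_{ℓ=1}^R s_ℓ ∂²_{uu}Φ_ℓ(x, f(x)) (the full (n+R)×(n+R) Hessian of Φ_ℓ in all n+R variables), upper-right block (∂_u Φ(x, f(x)))ᵀ, lower-left block ∂_u Φ(x, f(x))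 (the R×(n+R) Jacobian of Φ), and lower-right block the R×R zero matrix. -/
open scoped BigOperators Matrix

noncomputable section

/-- The Hessian matrix of a function `g : ℝⁿ → ℝ` at a point. -/
def hess {n : ℕ} (g : (Fin n → ℝ) → ℝ) (x : Fin n → ℝ) : Matrix (Fin n) (Fin n) ℝ :=
  Matrix.of fun i j => fderiv ℝ (fun y => fderiv ℝ g y (Pi.single j 1)) x (Pi.single i 1)

/-- Standard basis vectors of `ℝⁿ × ℝ^R`, indexed by `Fin n ⊕ Fin R`. -/
def ebU {n R : ℕ} : Fin n ⊕ Fin R → (Fin n → ℝ) × (Fin R → ℝ) :=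
  Sum.elim (fun i => (Pi.single i 1, 0)) (fun s => (0, Pi.single s 1))

/-- The `R × R` Jacobian of `Φ : ℝⁿ × ℝ^R → ℝ^R` in the last `R` coordinates. -/
def dyPhi {n R : ℕ} (Φ : (Fin n → ℝ) × (Fin R → ℝ) → Fin R → ℝ)
    (p : (Fin n → ℝ) × (Fin R → ℝ)) : Matrix (Fin R) (Fin R) ℝ :=
  Matrix.of fun r s => fderiv ℝ (fun q => Φ q r) p (0, Pi.single s 1)

/-- The full `R × (n+R)` Jacobian of `Φ`. -/
def duPhi {n R : ℕ} (Φ : (Fin n → ℝ) × (Fin R → ℝ) → Fin R → ℝ)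
    (p : (Fin n → ℝ) × (Fin R → ℝ)) : Matrix (Fin R) (Fin n ⊕ Fin R) ℝ :=
  Matrix.of fun r c => fderiv ℝ (fun q => Φ q r) p (ebU c)

/-- The full `(n+R) × (n+R)` Hessian of the `ℓ`-th component of `Φ` in all `n+R` variables. -/
def hessU {n R : ℕ} (Φ : (Fin n → ℝ) × (Fin R → ℝ) → Fin R → ℝ) (ℓ : Fin R)
    (p : (Fin n → ℝ) × (Fin R → ℝ)) : Matrix (Fin n ⊕ Fin R) (Fin n ⊕ Fin R) ℝ :=
  Matrix.of fun c c' => fderiv ℝ (fun q => fderiv ℝ (fun q' => Φ q' ℓ) q (ebU c')) p (ebU c)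

/-! ### Auxiliary lemmas -/

lemma single_decomp {m : ℕ} (u : Fin m → ℝ) : u = ∑ i, u i • (Pi.single i 1 : Fin m → ℝ) := by
  have h : ∀ i, u i • (Pi.single i 1 : Fin m → ℝ) = Pi.single i (u i) := by
    intro i; ext j; by_cases h : i = j <;> simp [Pi.single_apply, h]
  simp_rw [h]
  exact (Finset.univ_sum_single u).symm

lemma pair_decomp {n R : ℕ} (v : Fin n → ℝ) (w : Fin R → ℝ) :
    ((v, w) : (Fin n → ℝ) × (Fin R → ℝ)) =
      (∑ i, v i • ebU (Sum.inl i)) + ∑ r, w r • ebU (Sum.inr r) := by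
  ext j
  · simp only [ebU, Prod.fst_add, Prod.fst_sum, Sum.elim_inl, Sum.elim_inr, Prod.smul_fst,
      Prod.snd_sum, smul_zero, Finset.sum_const_zero, add_zero, Prod.fst]
    exact congrFun (single_decomp v) j
  · simp only [ebU, Prod.snd_add, Prod.snd_sum, Sum.elim_inl, Sum.elim_inr, Prod.smul_snd,
      smul_zero, Finset.sum_const_zero, zero_add, Prod.snd]
    exact congrFun (single_decomp w) j

lemma clm_pair {n R : ℕ} (L : ((Fin n → ℝ) × (Fin R → ℝ)) →L[ℝ] ℝ)
    (v : Fin n → ℝ) (w : Fin R → ℝ) :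
    L (v, w) = (∑ i, v i * L (ebU (Sum.inl i))) + ∑ r, w r * L (ebU (Sum.inr r)) := by
  conv_lhs => rw [pair_decomp v w]
  rw [map_add, map_sum, map_sum]
  simp [smul_eq_mul]

lemma bilin_expand {n R : ℕ}
    (B : ((Fin n → ℝ) × (Fin R → ℝ)) →L[ℝ] (((Fin n → ℝ) × (Fin R → ℝ)) →L[ℝ] ℝ))
    (a b : Fin n ⊕ Fin R → ℝ) :
    (∑ c, ∑ c', a c * b c' * B (ebU c) (ebU c'))
      = B (∑ c, a c • ebU c) (∑ c', b c' • ebU c') := by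
  have h1 : B (∑ c, a c • ebU c) = ∑ c, a c • B (ebU c) := by
    rw [map_sum]; simp_rw [map_smul]
  have h2 : ∀ c : Fin n ⊕ Fin R, (B (ebU c)) (∑ c', b c' • ebU c')
      = ∑ c', b c' * (B (ebU c)) (ebU c') := by
    intro c; rw [map_sum]; simp [smul_eq_mul]
  rw [h1, ContinuousLinearMap.sum_apply]
  apply Finset.sum_congr rfl; intro c _
  rw [ContinuousLinearMap.smul_apply, h2, smul_eq_mul, Finset.mul_sum]
  apply Finset.sum_congr rfl; intro c' _
  ring

lemma key0 {n R : ℕ} (U : Set (Fin n → ℝ)) (hUopen : IsOpen U)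
    (f : (Fin n → ℝ) → Fin R → ℝ) (hf : ContDiffOn ℝ (⊤ : ℕ∞) f U)
    (y : Fin n → ℝ) (hy : y ∈ U) (r : Fin R) (v : Fin n → ℝ) :
    fderiv ℝ (fun z => f z r) y v = fderiv ℝ f y v r := by
  have hfd : ContDiffAt ℝ (⊤ : ℕ∞) f y := hf.contDiffAt (hUopen.mem_nhds hy)
  have h : HasFDerivAt (fun z => f z r)
      ((ContinuousLinearMap.proj r).comp (fderiv ℝ f y)) y := by
    have h0 := (ContinuousLinearMap.proj (R := ℝ) (φ := fun _ : Fin R => ℝ) r).hasFDerivAt.comp y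
      (hfd.differentiableAt (by simp)).hasFDerivAt
    exact h0
  rw [h.fderiv]; rfl

lemma key1 {n R : ℕ} (Φ : (Fin n → ℝ) × (Fin R → ℝ) → Fin R → ℝ) (hΦ : ContDiff ℝ (⊤ : ℕ∞) Φ)
    (U : Set (Fin n → ℝ)) (hUopen : IsOpen U)
    (f : (Fin n → ℝ) → Fin R → ℝ) (hf : ContDiffOn ℝ (⊤ : ℕ∞) f U)
    (hgraph : ∀ x ∈ U, Φ (x, f x) = 0)
    (x : Fin n → ℝ) (hx : x ∈ U) (ℓ : Fin R) (v : Fin n → ℝ) :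
    fderiv ℝ (fun q => Φ q ℓ) (x, f x) (v, fderiv ℝ f x v) = 0 := by
  have hfd : ContDiffAt ℝ (⊤ : ℕ∞) f x := hf.contDiffAt (hUopen.mem_nhds hx)
  have hΦℓ : ContDiff ℝ (⊤ : ℕ∞) (fun q => Φ q ℓ) := (contDiff_pi.mp hΦ) ℓ
  have hg : HasFDerivAt (fun y => ((y, f y) : (Fin n → ℝ) × (Fin R → ℝ)))
      ((ContinuousLinearMap.id ℝ _).prod (fderiv ℝ f x)) x :=
    HasFDerivAt.prodMk (hasFDerivAt_id x) (hfd.differentiableAt (by simp)).hasFDerivAt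
  have hcomp : HasFDerivAt (fun y => Φ (y, f y) ℓ)
      ((fderiv ℝ (fun q => Φ q ℓ) (x, f x)).comp
        ((ContinuousLinearMap.id ℝ _).prod (fderiv ℝ f x))) x :=
    by have := ((hΦℓ.differentiable (by simp)) (x, f x)).hasFDerivAt.comp x hg; exact this
  have h0 : fderiv ℝ (fun y => Φ (y, f y) ℓ) x = 0 := by
    have hev : (fun y => Φ (y, f y) ℓ) =ᶠ[nhds x] fun _ => (0:ℝ) :=
      Filter.eventually_of_mem (hUopen.mem_nhds hx) fun y hy => by
        simp only [hgraph y hy]; rfl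
    rw [hev.fderiv_eq, fderiv_fun_const]; rfl
  have h1 := hcomp.fderiv
  rw [h0] at h1
  have h2 := congrFun (congrArg (fun (L : (Fin n → ℝ) →L[ℝ] ℝ) => (L : (Fin n → ℝ) → ℝ)) h1) v
  simpa using h2.symm

lemma key2 {n R : ℕ} (Φ : (Fin n → ℝ) × (Fin R → ℝ) → Fin R → ℝ) (hΦ : ContDiff ℝ (⊤ : ℕ∞) Φ)
    (U : Set (Fin n → ℝ)) (hUopen : IsOpen U)
    (f : (Fin n → ℝ) → Fin R → ℝ) (hf : ContDiffOn ℝ (⊤ : ℕ∞) f U)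
    (hgraph : ∀ x ∈ U, Φ (x, f x) = 0)
    (x : Fin n → ℝ) (hx : x ∈ U) (ℓ : Fin R) (v w : Fin n → ℝ) :
    fderiv ℝ (fderiv ℝ (fun q => Φ q ℓ)) (x, f x) (w, fderiv ℝ f x w) (v, fderiv ℝ f x v)
      + fderiv ℝ (fun q => Φ q ℓ) (x, f x) (0, fderiv ℝ (fderiv ℝ f) x w v) = 0 := by
  have hfd : ContDiffAt ℝ (⊤ : ℕ∞) f x := hf.contDiffAt (hUopen.mem_nhds hx)
  have hΦℓ : ContDiff ℝ (⊤ : ℕ∞) (fun q => Φ q ℓ) := (contDiff_pi.mp hΦ) ℓ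
  have hg : HasFDerivAt (fun y => ((y, f y) : (Fin n → ℝ) × (Fin R → ℝ)))
      ((ContinuousLinearMap.id ℝ _).prod (fderiv ℝ f x)) x :=
    HasFDerivAt.prodMk (hasFDerivAt_id x) (hfd.differentiableAt (by simp)).hasFDerivAt
  have hD2 : HasFDerivAt (fderiv ℝ (fun q => Φ q ℓ))
      (fderiv ℝ (fderiv ℝ (fun q => Φ q ℓ)) (x, f x)) (x, f x) :=
    (((hΦℓ.fderiv_right (m := (⊤:ℕ∞)) (by exact_mod_cast le_top)).differentiable
      (by simp)) (x, f x)).hasFDerivAt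
  have hB : HasFDerivAt (fun y => fderiv ℝ (fun q => Φ q ℓ) (y, f y))
      ((fderiv ℝ (fderiv ℝ (fun q => Φ q ℓ)) (x, f x)).comp
        ((ContinuousLinearMap.id ℝ _).prod (fderiv ℝ f x))) x :=
    hD2.comp x hg
  have hdf' : HasFDerivAt (fderiv ℝ f) (fderiv ℝ (fderiv ℝ f) x) x :=
    ((hfd.fderiv_right (m := (⊤:ℕ∞)) (by exact_mod_cast le_top)).differentiableAt
      (by simp)).hasFDerivAt
  have hu : HasFDerivAt (fun y => ((v, fderiv ℝ f y v) : (Fin n → ℝ) × (Fin R → ℝ)))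
      ((0 : (Fin n → ℝ) →L[ℝ] (Fin n → ℝ)).prod
        ((ContinuousLinearMap.apply ℝ (Fin R → ℝ) v).comp (fderiv ℝ (fderiv ℝ f) x))) x :=
    HasFDerivAt.prodMk (hasFDerivAt_const v x)
      (((ContinuousLinearMap.apply ℝ (Fin R → ℝ) v).hasFDerivAt).comp x hdf')
  have hχ := hB.clm_apply hu
  have h0 : fderiv ℝ (fun y => fderiv ℝ (fun q => Φ q ℓ) (y, f y) (v, fderiv ℝ f y v)) x = 0 := by
    have hev : (fun y => fderiv ℝ (fun q => Φ q ℓ) (y, f y) (v, fderiv ℝ f y v))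
        =ᶠ[nhds x] fun _ => (0:ℝ) :=
      Filter.eventually_of_mem (hUopen.mem_nhds hx) fun y hy =>
        key1 Φ hΦ U hUopen f hf hgraph y hy ℓ v
    rw [hev.fderiv_eq, fderiv_fun_const]; rfl
  have h1 := hχ.fderiv
  rw [h0] at h1
  have h2 := congrFun (congrArg (fun (L : (Fin n → ℝ) →L[ℝ] ℝ) => (L : (Fin n → ℝ) → ℝ)) h1) w
  simp only [ContinuousLinearMap.zero_apply, ContinuousLinearMap.add_apply,
    ContinuousLinearMap.comp_apply, ContinuousLinearMap.flip_apply,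
    ContinuousLinearMap.prod_apply, ContinuousLinearMap.coe_id', id_eq,
    ContinuousLinearMap.apply_apply] at h2
  linarith [h2]

lemma key3 {n R : ℕ} (U : Set (Fin n → ℝ)) (hUopen : IsOpen U)
    (f : (Fin n → ℝ) → Fin R → ℝ) (hf : ContDiffOn ℝ (⊤ : ℕ∞) f U)
    (x : Fin n → ℝ) (hx : x ∈ U) (r : Fin R) (i j : Fin n) :
    hess (fun y => f y r) x i j
      = fderiv ℝ (fderiv ℝ f) x (Pi.single i 1) (Pi.single j 1) r := by
  have hfd : ContDiffAt ℝ (⊤ : ℕ∞) f x := hf.contDiffAt (hUopen.mem_nhds hx)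
  have hdf' : HasFDerivAt (fderiv ℝ f) (fderiv ℝ (fderiv ℝ f) x) x :=
    ((hfd.fderiv_right (m := (⊤:ℕ∞)) (by exact_mod_cast le_top)).differentiableAt
      (by simp)).hasFDerivAt
  have hev : (fun y => fderiv ℝ (fun z => f z r) y (Pi.single j 1))
      =ᶠ[nhds x] fun y => fderiv ℝ f y (Pi.single j 1) r :=
    Filter.eventually_of_mem (hUopen.mem_nhds hx) fun y hy =>
      key0 U hUopen f hf y hy r (Pi.single j 1)
  have h2 : HasFDerivAt (fun y => fderiv ℝ f y (Pi.single j 1) r)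
      (((ContinuousLinearMap.proj r).comp
        (ContinuousLinearMap.apply ℝ (Fin R → ℝ) (Pi.single j 1))).comp
          (fderiv ℝ (fderiv ℝ f) x)) x := by
    have h0 := (((ContinuousLinearMap.proj (R := ℝ) (φ := fun _ : Fin R => ℝ) r).comp
        (ContinuousLinearMap.apply ℝ (Fin R → ℝ) (Pi.single j 1)))).hasFDerivAt.comp x hdf'
    exact h0
  show fderiv ℝ (fun y => fderiv ℝ (fun z => f z r) y (Pi.single j 1)) x (Pi.single i 1) = _
  rw [hev.fderiv_eq, h2.fderiv]; rfl

lemma key4 {n R : ℕ} (Φ : (Fin n → ℝ) × (Fin R → ℝ) → Fin R → ℝ) (hΦ : ContDiff ℝ (⊤ : ℕ∞) Φ)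
    (ℓ : Fin R) (p : (Fin n → ℝ) × (Fin R → ℝ)) (c c' : Fin n ⊕ Fin R) :
    hessU Φ ℓ p c c' = fderiv ℝ (fderiv ℝ (fun q => Φ q ℓ)) p (ebU c) (ebU c') := by
  have hΦℓ : ContDiff ℝ (⊤ : ℕ∞) (fun q => Φ q ℓ) := (contDiff_pi.mp hΦ) ℓ
  have hD2 : HasFDerivAt (fderiv ℝ (fun q => Φ q ℓ))
      (fderiv ℝ (fderiv ℝ (fun q => Φ q ℓ)) p) p :=
    (((hΦℓ.fderiv_right (m := (⊤:ℕ∞)) (by exact_mod_cast le_top)).differentiable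
      (by simp)) p).hasFDerivAt
  have h2 : HasFDerivAt (fun q => fderiv ℝ (fun q' => Φ q' ℓ) q (ebU c'))
      ((ContinuousLinearMap.apply ℝ ℝ (ebU c')).comp
        (fderiv ℝ (fderiv ℝ (fun q => Φ q ℓ)) p)) p :=
    (ContinuousLinearMap.apply ℝ ℝ (ebU c')).hasFDerivAt.comp p hD2
  show fderiv ℝ (fun q => fderiv ℝ (fun q' => Φ q' ℓ) q (ebU c')) p (ebU c) = _
  rw [h2.fderiv]; rfl

lemma det_aux {n R : ℕ} (G : Matrix (Fin n ⊕ Fin R) (Fin n ⊕ Fin R) ℝ)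
    (A : Matrix (Fin R) (Fin R) ℝ) (hA : A.det ≠ 0) :
    |(Matrix.fromBlocks G (Matrix.fromRows (0 : Matrix (Fin n) (Fin R) ℝ) Aᵀ)
        (Matrix.fromCols (0 : Matrix (Fin R) (Fin n) ℝ) A) 0).det|
      = |A.det| ^ 2 * |G.toBlocks₁₁.det| := by
  classical
  set K : Matrix (Fin R ⊕ Fin R) (Fin R ⊕ Fin R) ℝ :=
    Matrix.fromBlocks G.toBlocks₂₂ Aᵀ A 0 with hKdef
  set S : Matrix (Fin R ⊕ Fin R) (Fin R ⊕ Fin R) ℝ := Matrix.fromBlocks 0 1 1 0 with hSdef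
  have hSS : S * S = 1 := by
    rw [hSdef, Matrix.fromBlocks_multiply]
    simp [Matrix.fromBlocks_one]
  have hSdet : |S.det| = 1 := by
    have h1 : S.det * S.det = 1 := by
      rw [← Matrix.det_mul, hSS, Matrix.det_one]
    rcases mul_self_eq_one_iff.mp h1 with h | h <;> simp [h]
  have hS' : (Matrix.fromBlocks (0 : Matrix (Fin R) (Fin R) ℝ) Aᵀ A 0).det
      = Aᵀ.det * A.det * S.det := by
    have h : Matrix.fromBlocks Aᵀ (0 : Matrix (Fin R) (Fin R) ℝ) 0 A * S
        = Matrix.fromBlocks (0 : Matrix (Fin R) (Fin R) ℝ) Aᵀ A 0 := by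
      rw [hSdef, Matrix.fromBlocks_multiply]; simp
    rw [← h, Matrix.det_mul, Matrix.det_fromBlocks_zero₁₂]
  have hAunit : IsUnit A.det := isUnit_iff_ne_zero.mpr hA
  have hAT : IsUnit Aᵀ.det := by rwa [Matrix.det_transpose, isUnit_iff_ne_zero]
  have hK : K = Matrix.fromBlocks 1 (G.toBlocks₂₂ * A⁻¹) 0 1 *
      Matrix.fromBlocks (0 : Matrix (Fin R) (Fin R) ℝ) Aᵀ A 0 := by
    rw [Matrix.fromBlocks_multiply, hKdef]
    congr 1 <;> simp [Matrix.mul_assoc, Matrix.nonsing_inv_mul A hAunit]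
  have hKdet : |K.det| = |A.det| ^ 2 := by
    rw [hK, Matrix.det_mul, Matrix.det_fromBlocks_zero₂₁, hS', Matrix.det_transpose]
    simp [abs_mul, hSdet, sq]
  have hKne : K.det ≠ 0 := by
    intro h
    rw [h, abs_zero] at hKdet
    exact hA (by simpa [pow_eq_zero_iff, abs_eq_zero] using hKdet.symm)
  haveI : Invertible K := K.invertibleOfIsUnitDet (isUnit_iff_ne_zero.mpr hKne)
  have hGA : Aᵀ * ((Aᵀ)⁻¹ * G.toBlocks₂₁) = G.toBlocks₂₁ := by
    rw [← Matrix.mul_assoc, Matrix.mul_nonsing_inv _ hAT, Matrix.one_mul]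
  have hX : ⅟K * Matrix.fromRows G.toBlocks₂₁ (0 : Matrix (Fin R) (Fin n) ℝ)
      = Matrix.fromRows (0 : Matrix (Fin R) (Fin n) ℝ) ((Aᵀ)⁻¹ * G.toBlocks₂₁) := by
    have h2 : K * Matrix.fromRows (0 : Matrix (Fin R) (Fin n) ℝ) ((Aᵀ)⁻¹ * G.toBlocks₂₁)
        = Matrix.fromRows G.toBlocks₂₁ (0 : Matrix (Fin R) (Fin n) ℝ) := by
      rw [hKdef, Matrix.fromBlocks_mul_fromRows]
      simp [hGA]
    rw [← h2, ← Matrix.mul_assoc, invOf_mul_self, Matrix.one_mul]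
  have hzero : Matrix.fromCols G.toBlocks₁₂ (0 : Matrix (Fin n) (Fin R) ℝ) * ⅟K *
      Matrix.fromRows G.toBlocks₂₁ (0 : Matrix (Fin R) (Fin n) ℝ) = 0 := by
    rw [Matrix.mul_assoc, hX, Matrix.fromCols_mul_fromRows]
    simp
  set N : Matrix ((Fin n ⊕ Fin R) ⊕ Fin R) ((Fin n ⊕ Fin R) ⊕ Fin R) ℝ :=
    Matrix.fromBlocks G (Matrix.fromRows (0 : Matrix (Fin n) (Fin R) ℝ) Aᵀ)
      (Matrix.fromCols (0 : Matrix (Fin R) (Fin n) ℝ) A) 0 with hNdef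
  have hre : N.submatrix (Equiv.sumAssoc (Fin n) (Fin R) (Fin R)).symm
      (Equiv.sumAssoc (Fin n) (Fin R) (Fin R)).symm
      = Matrix.fromBlocks G.toBlocks₁₁ (Matrix.fromCols G.toBlocks₁₂ 0)
          (Matrix.fromRows G.toBlocks₂₁ 0) K := by
    ext c c'
    rcases c with i | (r | r') <;> rcases c' with j | (q | q') <;>
      simp [hNdef, hKdef, Matrix.fromBlocks, Matrix.toBlocks₁₁, Matrix.toBlocks₁₂,
        Matrix.toBlocks₂₁, Matrix.toBlocks₂₂, Matrix.fromRows_apply_inl, Matrix.fromRows_apply_inr,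
          Matrix.fromCols_apply_inl, Matrix.fromCols_apply_inr,
        Equiv.sumAssoc]
  have hdet : N.det = K.det * G.toBlocks₁₁.det := by
    rw [← Matrix.det_submatrix_equiv_self (Equiv.sumAssoc (Fin n) (Fin R) (Fin R)).symm N,
      hre, Matrix.det_fromBlocks₂₂, hzero, sub_zero]
  rw [hdet, abs_mul, hKdet]

/-- the implicit (defining-function) formulation of the curvature condition. -/
theorem statement17
    (n R : ℕ)
    (Φ : (Fin n → ℝ) × (Fin R → ℝ) → Fin R → ℝ) (hΦ : ContDiff ℝ (⊤ : ℕ∞) Φ)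
    (U : Set (Fin n → ℝ)) (hUopen : IsOpen U)
    (f : (Fin n → ℝ) → Fin R → ℝ) (hf : ContDiffOn ℝ (⊤ : ℕ∞) f U)
    (hgraph : ∀ x ∈ U, Φ (x, f x) = 0)
    (hreg : ∀ x ∈ U, Matrix.det (dyPhi Φ (x, f x)) ≠ 0) :
    ∀ x ∈ U, ∀ s : Fin R → ℝ,
      |Matrix.det (dyPhi Φ (x, f x))| ^ 2 *
          |Matrix.det (∑ ℓ, (∑ r, s r * dyPhi Φ (x, f x) r ℓ) • hess (fun y => f y ℓ) x)| =
        |Matrix.det (Matrix.fromBlocks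
            (∑ ℓ, s ℓ • hessU Φ ℓ (x, f x))
            (duPhi Φ (x, f x))ᵀ
            (duPhi Φ (x, f x))
            (0 : Matrix (Fin R) (Fin R) ℝ))| := by
  intro x hx s
  classical
  set A := dyPhi Φ (x, f x) with hAdef
  set Dm := duPhi Φ (x, f x) with hDmdef
  set Hm := ∑ ℓ, s ℓ • hessU Φ ℓ (x, f x) with hHmdef
  set T := ∑ ℓ, (∑ r, s r * A r ℓ) • hess (fun y => f y ℓ) x with hTdef
  set Fm : Matrix (Fin R) (Fin n) ℝ :=
    Matrix.of (fun r i => fderiv ℝ f x (Pi.single i 1) r) with hFmdef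
  set P₀ : Matrix (Fin n ⊕ Fin R) (Fin n ⊕ Fin R) ℝ := Matrix.fromBlocks 1 0 Fm 1 with hP0def
  set M := Matrix.fromBlocks Hm Dmᵀ Dm (0 : Matrix (Fin R) (Fin R) ℝ) with hMdef
  set Q : Matrix ((Fin n ⊕ Fin R) ⊕ Fin R) ((Fin n ⊕ Fin R) ⊕ Fin R) ℝ :=
    Matrix.fromBlocks P₀ 0 0 1 with hQdef
  have hAne : A.det ≠ 0 := hreg x hx
  -- first-derivative identity in matrix form
  have hDP : Dm * P₀ = Matrix.fromCols 0 A := by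
    ext r c
    rw [Matrix.mul_apply, Fintype.sum_sum_type]
    cases c with
    | inl i =>
      have h := key1 Φ hΦ U hUopen f hf hgraph x hx r (Pi.single i 1)
      rw [clm_pair] at h
      have h' : (∑ i', (Pi.single i 1 : Fin n → ℝ) i' * Dm r (Sum.inl i'))
          + ∑ r', Fm r' i * Dm r (Sum.inr r') = 0 := h
      simp only [Pi.single_apply, ite_mul, one_mul, zero_mul,
        Finset.sum_ite_eq, Finset.sum_ite_eq', Finset.mem_univ, if_true] at h'
      simp only [hP0def, Matrix.fromBlocks_apply₁₁, Matrix.fromBlocks_apply₂₁,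
        Matrix.one_apply, mul_ite, mul_one, mul_zero,
        Finset.sum_ite_eq', Finset.mem_univ, if_true,
        Matrix.fromCols_apply_inl, Matrix.zero_apply]
      calc Dm r (Sum.inl i) + ∑ r', Dm r (Sum.inr r') * Fm r' i
          = Dm r (Sum.inl i) + ∑ r', Fm r' i * Dm r (Sum.inr r') := by
            simp [mul_comm]
        _ = 0 := h'
    | inr r'' =>
      simp only [hP0def, Matrix.fromBlocks_apply₁₂, Matrix.fromBlocks_apply₂₂,
        Matrix.one_apply, Matrix.zero_apply, mul_zero, mul_ite, mul_one,
        Finset.sum_const_zero, Finset.sum_ite_eq', Finset.mem_univ, if_true, zero_add,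
        Matrix.fromCols_apply_inr]
      rfl
  -- expansion of conjugated entries
  have hexp : ∀ (B : Matrix (Fin n ⊕ Fin R) (Fin n ⊕ Fin R) ℝ) (c₀ c₁ : Fin n ⊕ Fin R),
      (P₀ᵀ * B * P₀) c₀ c₁ = ∑ c, ∑ c', P₀ c c₀ * B c c' * P₀ c' c₁ := by
    intro B c₀ c₁
    rw [Matrix.mul_apply]
    simp_rw [Matrix.mul_apply, Matrix.transpose_apply, Finset.sum_mul]
    rw [Finset.sum_comm]
  -- column decomposition
  have hdecomp : ∀ i : Fin n,
      ((Pi.single i 1, fderiv ℝ f x (Pi.single i 1)) : (Fin n → ℝ) × (Fin R → ℝ))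
        = ∑ c, P₀ c (Sum.inl i) • ebU c := by
    intro i
    rw [Fintype.sum_sum_type, pair_decomp (Pi.single i 1) (fderiv ℝ f x (Pi.single i 1))]
    have hcoef : ∀ i', (Pi.single i 1 : Fin n → ℝ) i' = P₀ (Sum.inl i') (Sum.inl i) := by
      intro i'
      rw [hP0def]
      simp [Matrix.one_apply, Pi.single_apply, eq_comm]
    simp_rw [hcoef]
    rfl
  -- value of the second-derivative bilinear form on tangent vectors
  have hval : ∀ (ℓ : Fin R) (i j : Fin n),
      fderiv ℝ (fderiv ℝ (fun q => Φ q ℓ)) (x, f x)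
          (Pi.single i 1, fderiv ℝ f x (Pi.single i 1))
          (Pi.single j 1, fderiv ℝ f x (Pi.single j 1))
        = -∑ r, A ℓ r * hess (fun y => f y r) x i j := by
    intro ℓ i j
    have h2 := key2 Φ hΦ U hUopen f hf hgraph x hx ℓ (Pi.single j 1) (Pi.single i 1)
    have h3 : fderiv ℝ (fun q => Φ q ℓ) (x, f x)
        (0, fderiv ℝ (fderiv ℝ f) x (Pi.single i 1) (Pi.single j 1))
        = ∑ r, A ℓ r * hess (fun y => f y r) x i j := by
      rw [clm_pair]
      simp only [Pi.zero_apply, zero_mul, Finset.sum_const_zero, zero_add]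
      apply Finset.sum_congr rfl; intro r _
      rw [key3 U hUopen f hf x hx r i j]
      exact mul_comm _ _
    linarith [h2, h3]
  -- per-component conjugated Hessian entries
  have hell : ∀ (ℓ : Fin R) (i j : Fin n),
      (P₀ᵀ * hessU Φ ℓ (x, f x) * P₀) (Sum.inl i) (Sum.inl j)
        = -∑ r, A ℓ r * hess (fun y => f y r) x i j := by
    intro ℓ i j
    rw [hexp]
    calc ∑ c, ∑ c', P₀ c (Sum.inl i) * hessU Φ ℓ (x, f x) c c' * P₀ c' (Sum.inl j)
        = ∑ c, ∑ c', P₀ c (Sum.inl i) * P₀ c' (Sum.inl j) *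
            fderiv ℝ (fderiv ℝ (fun q => Φ q ℓ)) (x, f x) (ebU c) (ebU c') := by
          apply Finset.sum_congr rfl; intro c _
          apply Finset.sum_congr rfl; intro c' _
          rw [key4 Φ hΦ]; ring
      _ = fderiv ℝ (fderiv ℝ (fun q => Φ q ℓ)) (x, f x)
            (∑ c, P₀ c (Sum.inl i) • ebU c) (∑ c', P₀ c' (Sum.inl j) • ebU c') :=
          bilin_expand _ _ _
      _ = -∑ r, A ℓ r * hess (fun y => f y r) x i j := by
          rw [← hdecomp i, ← hdecomp j, hval ℓ i j]
  -- the top-left block of the conjugated matrix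
  have hGT : (P₀ᵀ * Hm * P₀).toBlocks₁₁ = -T := by
    have hsum : P₀ᵀ * Hm * P₀ = ∑ ℓ, s ℓ • (P₀ᵀ * hessU Φ ℓ (x, f x) * P₀) := by
      rw [hHmdef, Finset.mul_sum, Finset.sum_mul]
      apply Finset.sum_congr rfl; intro ℓ _
      rw [Matrix.mul_smul, Matrix.smul_mul]
    ext i j
    show (P₀ᵀ * Hm * P₀) (Sum.inl i) (Sum.inl j) = (-T) i j
    rw [hsum, Matrix.sum_apply]
    simp_rw [Matrix.smul_apply, hell, smul_eq_mul]
    rw [hTdef]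
    simp only [Matrix.neg_apply, Matrix.sum_apply, Matrix.smul_apply, smul_eq_mul]
    simp_rw [mul_neg]
    rw [Finset.sum_neg_distrib, neg_inj]
    simp_rw [Finset.mul_sum, Finset.sum_mul]
    rw [Finset.sum_comm]
    apply Finset.sum_congr rfl; intro u _
    apply Finset.sum_congr rfl; intro v _
    ring
  -- determinant bookkeeping
  have hQdet : Q.det = 1 := by
    rw [hQdef, Matrix.det_fromBlocks_zero₂₁, hP0def, Matrix.det_fromBlocks_zero₁₂]
    simp
  have ht : P₀ᵀ * Dmᵀ = Matrix.fromRows 0 Aᵀ := by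
    rw [← Matrix.transpose_mul, hDP, Matrix.transpose_fromCols, Matrix.transpose_zero]
  have hQMQ : Qᵀ * M * Q = Matrix.fromBlocks (P₀ᵀ * Hm * P₀)
      (Matrix.fromRows 0 Aᵀ) (Matrix.fromCols 0 A) 0 := by
    rw [hQdef, hMdef, Matrix.fromBlocks_transpose, Matrix.fromBlocks_multiply,
      Matrix.fromBlocks_multiply]
    simp only [Matrix.transpose_zero, Matrix.transpose_one, Matrix.mul_zero, Matrix.zero_mul,
      Matrix.mul_one, Matrix.one_mul, add_zero, zero_add, hDP, ht]
  have h1 : M.det = (Qᵀ * M * Q).det := by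
    rw [Matrix.det_mul, Matrix.det_mul, Matrix.det_transpose, hQdet, one_mul, mul_one]
  have hMdet : |M.det| = |A.det| ^ 2 * |T.det| := by
    rw [h1, hQMQ, det_aux _ _ hAne, hGT, Matrix.det_neg]
    simp [abs_mul, abs_pow]
  exact hMdet.symm
end
end
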